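/- With a single action a and distinct propositional variables A and B, the formula νY.μX.((A ∧ ⟨a⟩X) ∨ (B ∧ ⟨a⟩Y)) of the modal mu-calculus is not equivalent to any formula in Σμ2 (i.e., to any formula of index {1,0}). -/

import Mathlib

namespace MuCalc

/-- Formulas of the modal mu-calculus in guarded positive form. Propositional
variables and fixpoint variables are represented by natural numbers. -/
inductive Formula (Act : Type) : Type where
  | tt : Formula Act
  | ff : Formula Act
  | prop (P : ℕ) : Formula Act
  | nprop (P : ℕ) : Formula Act
  | var (X : ℕ) : Formula Act
  | and (φ ψ : Formula Act) : Formula Act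
  | or (φ ψ : Formula Act) : Formula Act
  | dia (a : Act) (φ : Formula Act) : Formula Act
  | box (a : Act) (φ : Formula Act) : Formula Act
  | mu (X : ℕ) (φ : Formula Act) : Formula Act
  | nu (X : ℕ) (φ : Formula Act) : Formula Act
  deriving DecidableEq

/-- A labelled transition system with a distinguished initial state. -/
structure LTS (Act : Type) where
  State : Type
  init : State
  trans : State → Act → State → Prop
  val : State → ℕ → Prop

/-- Knaster–Tarski semantics of the modal mu-calculus. -/
def sem {Act : Type} (M : LTS Act) : Formula Act → (ℕ → Set M.State) → Set M.State
  | .tt, _ => Set.univ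
  | .ff, _ => ∅
  | .prop P, _ => {s | M.val s P}
  | .nprop P, _ => {s | ¬ M.val s P}
  | .var X, ρ => ρ X
  | .and φ ψ, ρ => sem M φ ρ ∩ sem M ψ ρ
  | .or φ ψ, ρ => sem M φ ρ ∪ sem M ψ ρ
  | .dia a φ, ρ => {s | ∃ t, M.trans s a t ∧ t ∈ sem M φ ρ}
  | .box a φ, ρ => {s | ∀ t, M.trans s a t → t ∈ sem M φ ρ}
  | .mu X φ, ρ => ⋂₀ {T | sem M φ (Function.update ρ X T) ⊆ T}
  | .nu X φ, ρ => ⋃₀ {T | T ⊆ sem M φ (Function.update ρ X T)}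

/-- `M ⊨ φ`: the formula holds at the initial state. -/
def Sat {Act : Type} (M : LTS Act) (φ : Formula Act) : Prop :=
  M.init ∈ sem M φ (fun _ => ∅)

/-- Two formulas are equivalent if they hold in exactly the same structures. -/
def FEquiv {Act : Type} (φ ψ : Formula Act) : Prop :=
  ∀ M : LTS Act, Sat M φ ↔ Sat M ψ

/-- Free (fixpoint) variables of a formula. -/
def freeVars {Act : Type} : Formula Act → Set ℕ
  | .var X => {X}
  | .and φ ψ | .or φ ψ => freeVars φ ∪ freeVars ψ
  | .dia _ φ | .box _ φ => freeVars φ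
  | .mu X φ | .nu X φ => freeVars φ \ {X}
  | _ => ∅

/-- Fixpoint variables bound in a formula. -/
def fixVars {Act : Type} : Formula Act → Set ℕ
  | .and φ ψ | .or φ ψ => fixVars φ ∪ fixVars ψ
  | .dia _ φ | .box _ φ => fixVars φ
  | .mu X φ | .nu X φ => insert X (fixVars φ)
  | _ => ∅

/-- `PA Ω φ`: `Ω` is a valid priority assignment for `φ`: μ-bound variables get odd
priorities, ν-bound variables get even priorities, and any variable free in the
binding formula of `X` gets a priority at least `Ω X`. -/
def PA {Act : Type} (Ω : ℕ → ℕ) : Formula Act → Prop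
  | .and φ ψ | .or φ ψ => PA Ω φ ∧ PA Ω ψ
  | .dia _ φ | .box _ φ => PA Ω φ
  | .mu X φ => Odd (Ω X) ∧ (∀ Y ∈ freeVars φ, Ω X ≤ Ω Y) ∧ PA Ω φ
  | .nu X φ => Even (Ω X) ∧ (∀ Y ∈ freeVars φ, Ω X ≤ Ω Y) ∧ PA Ω φ
  | _ => True

/-- `φ` has a priority assignment with co-domain contained in `I`. -/
def HasIndexIn {Act : Type} (Ψ : Formula Act) (I : Set ℕ) : Prop :=
  ∃ Ω : ℕ → ℕ, PA Ω Ψ ∧ ∀ X ∈ fixVars Ψ, Ω X ∈ I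

/-- The class `Σμ2`: formulas of index `{1,0}`. -/
def IsSigma2 {Act : Type} (Ψ : Formula Act) : Prop := HasIndexIn Ψ {0, 1}

/-- The class `Πμ2`: formulas of index `{2,1}`. -/
def IsPi2 {Act : Type} (Ψ : Formula Act) : Prop := HasIndexIn Ψ {1, 2}

/-- `Ψ` is semantically in `Σμ2`: it is equivalent to some formula of index `{1,0}`. -/
def SemSigma2 {Act : Type} (Ψ : Formula Act) : Prop :=
  ∃ Φ : Formula Act, IsSigma2 Φ ∧ FEquiv Ψ Φ

/-- `Ψ` is semantically in `Πμ2`. -/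
def SemPi2 {Act : Type} (Ψ : Formula Act) : Prop :=
  ∃ Φ : Formula Act, IsPi2 Φ ∧ FEquiv Ψ Φ

/-- Syntactic subformula relation. -/
inductive Subf {Act : Type} : Formula Act → Formula Act → Prop
  | refl (φ : Formula Act) : Subf φ φ
  | andl {χ φ ψ : Formula Act} : Subf χ φ → Subf χ (.and φ ψ)
  | andr {χ φ ψ : Formula Act} : Subf χ ψ → Subf χ (.and φ ψ)
  | orl {χ φ ψ : Formula Act} : Subf χ φ → Subf χ (.or φ ψ)
  | orr {χ φ ψ : Formula Act} : Subf χ ψ → Subf χ (.or φ ψ)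
  | dia {χ φ : Formula Act} {a : Act} : Subf χ φ → Subf χ (.dia a φ)
  | box {χ φ : Formula Act} {a : Act} : Subf χ φ → Subf χ (.box a φ)
  | mu {χ φ : Formula Act} {X : ℕ} : Subf χ φ → Subf χ (.mu X φ)
  | nu {χ φ : Formula Act} {X : ℕ} : Subf χ φ → Subf χ (.nu X φ)

/-- `χ` is the binding formula of the fixpoint variable `X` in `Ψ`. -/
def BindsIn {Act : Type} (Ψ : Formula Act) (X : ℕ) (χ : Formula Act) : Prop :=
  Subf (.mu X χ) Ψ ∨ Subf (.nu X χ) Ψ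

/-- The number of subformulas (size) of a formula. -/
def size {Act : Type} : Formula Act → ℕ
  | .and φ ψ | .or φ ψ => size φ + size ψ + 1
  | .dia _ φ | .box _ φ | .mu _ φ | .nu _ φ => size φ + 1
  | _ => 1

/-- Every occurrence of `X` is in the scope of a modality. -/
def GuardedIn {Act : Type} (X : ℕ) : Formula Act → Prop
  | .var Y => Y ≠ X
  | .and φ ψ | .or φ ψ => GuardedIn X φ ∧ GuardedIn X ψ
  | .mu Y φ | .nu Y φ => Y = X ∨ GuardedIn X φ
  | _ => True

/-- A formula is guarded if every fixpoint variable is in the scope of a modality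
within its binding. -/
def Guarded {Act : Type} : Formula Act → Prop
  | .and φ ψ | .or φ ψ => Guarded φ ∧ Guarded ψ
  | .dia _ φ | .box _ φ => Guarded φ
  | .mu X φ | .nu X φ => GuardedIn X φ ∧ Guarded φ
  | _ => True

/-- Literals. -/
inductive IsLit {Act : Type} : Formula Act → Prop
  | prop (P : ℕ) : IsLit (.prop P)
  | nprop (P : ℕ) : IsLit (.nprop P)

/-- Finite conjunctions of literals. -/
inductive IsConjLit {Act : Type} : Formula Act → Prop
  | tt : IsConjLit .tt
  | lit {φ : Formula Act} : IsLit φ → IsConjLit φ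
  | and {φ ψ : Formula Act} : IsConjLit φ → IsConjLit ψ → IsConjLit (.and φ ψ)

/-- Disjunction of a finite list of formulas. -/
def orAll {Act : Type} : List (Formula Act) → Formula Act
  | [] => .ff
  | ψ :: l => .or ψ (orAll l)

/-- Conjunction of a finite list of formulas. -/
def andAll {Act : Type} : List (Formula Act) → Formula Act
  | [] => .tt
  | ψ :: l => .and ψ (andAll l)

/-- `→a B`: every formula of `B` holds at some `a`-successor and at every
`a`-successor some formula of `B` holds. -/
def arrowF {Act : Type} (a : Act) (B : List (Formula Act)) : Formula Act :=
  .and (andAll (B.map (.dia a))) (.box a (orAll B))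

/-- The Odd-choice formula `A ∧ ⋀_{a ∈ l} →a (B a)`. -/
def oddChoiceF {Act : Type} (A : Formula Act) (l : List Act)
    (B : Act → List (Formula Act)) : Formula Act :=
  .and A (andAll (l.map fun a => arrowF a (B a)))

/-- Formulas in disjunctive form. -/
inductive IsDisj {Act : Type} : Formula Act → Prop
  | tt : IsDisj .tt
  | ff : IsDisj .ff
  | var (X : ℕ) : IsDisj (.var X)
  | conj {φ : Formula Act} : IsConjLit φ → IsDisj φ
  | or {φ ψ : Formula Act} : IsDisj φ → IsDisj ψ → IsDisj (.or φ ψ)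
  | oddChoice {A : Formula Act} {l : List Act} {B : Act → List (Formula Act)} :
      IsConjLit A → (∀ a : Act, a ∈ l) → l.Nodup →
      (∀ a ψ, ψ ∈ B a → IsDisj ψ) → IsDisj (oddChoiceF A l B)
  | mu {X : ℕ} {φ : Formula Act} : IsDisj φ → IsDisj (.mu X φ)
  | nu {X : ℕ} {φ : Formula Act} : IsDisj φ → IsDisj (.nu X φ)

/-- An explicit injective encoding of formulas (over `Act = Fin k`) as natural
numbers, used to express computability. -/
def encodeFormula {k : ℕ} : Formula (Fin k) → ℕ
  | .tt => Nat.pair 0 0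
  | .ff => Nat.pair 1 0
  | .prop P => Nat.pair 2 P
  | .nprop P => Nat.pair 3 P
  | .var X => Nat.pair 4 X
  | .and φ ψ => Nat.pair 5 (Nat.pair (encodeFormula φ) (encodeFormula ψ))
  | .or φ ψ => Nat.pair 6 (Nat.pair (encodeFormula φ) (encodeFormula ψ))
  | .dia a φ => Nat.pair 7 (Nat.pair a.val (encodeFormula φ))
  | .box a φ => Nat.pair 8 (Nat.pair a.val (encodeFormula φ))
  | .mu X φ => Nat.pair 9 (Nat.pair X (encodeFormula φ))
  | .nu X φ => Nat.pair 10 (Nat.pair X (encodeFormula φ))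



/-! ### Auxiliary development -/

section Aux

open Classical

variable {Act : Type}

theorem sem_mono (M : LTS Act) (φ : Formula Act) :
    ∀ {ρ ρ' : ℕ → Set M.State}, (∀ X, ρ X ⊆ ρ' X) → sem M φ ρ ⊆ sem M φ ρ' := by
  induction φ with
  | tt => intro ρ ρ' _; exact subset_rfl
  | ff => intro ρ ρ' _; exact subset_rfl
  | prop P => intro ρ ρ' _; exact subset_rfl
  | nprop P => intro ρ ρ' _; exact subset_rfl
  | var X => intro ρ ρ' h; exact h X
  | and φ ψ ih1 ih2 => intro ρ ρ' h
                       exact Set.inter_subset_inter (ih1 h) (ih2 h)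
  | or φ ψ ih1 ih2 => intro ρ ρ' h
                      exact Set.union_subset_union (ih1 h) (ih2 h)
  | dia a φ ih => intro ρ ρ' h s hs
                  obtain ⟨t, ht, hts⟩ := hs
                  exact ⟨t, ht, ih h hts⟩
  | box a φ ih => intro ρ ρ' h s hs t ht
                  exact ih h (hs t ht)
  | mu X φ ih =>
      intro ρ ρ' h
      apply Set.sInter_subset_sInter
      intro T hT
      have hup : ∀ Y, Function.update ρ X T Y ⊆ Function.update ρ' X T Y := by
        intro Y
        by_cases hY : Y = X
        · subst hY; simp
        · simp [Function.update_of_ne hY]; exact h Y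
      exact (ih hup).trans hT
  | nu X φ ih =>
      intro ρ ρ' h
      apply Set.sUnion_subset_sUnion
      intro T hT
      have hup : ∀ Y, Function.update ρ X T Y ⊆ Function.update ρ' X T Y := by
        intro Y
        by_cases hY : Y = X
        · subst hY; simp
        · simp [Function.update_of_ne hY]; exact h Y
      exact hT.trans (ih hup)

theorem sem_mu_le (M : LTS Act) (φ : Formula Act) (X : ℕ) (ρ : ℕ → Set M.State)
    {T : Set M.State} (hT : sem M φ (Function.update ρ X T) ⊆ T) :
    sem M (.mu X φ) ρ ⊆ T :=
  Set.sInter_subset_of_mem hT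

theorem sem_mu_prefixed (M : LTS Act) (φ : Formula Act) (X : ℕ) (ρ : ℕ → Set M.State) :
    sem M φ (Function.update ρ X (sem M (.mu X φ) ρ)) ⊆ sem M (.mu X φ) ρ := by
  intro s hs
  apply Set.mem_sInter.2
  intro T hT
  have h1 : sem M (.mu X φ) ρ ⊆ T := sem_mu_le M φ X ρ hT
  have hup : ∀ Y, Function.update ρ X (sem M (.mu X φ) ρ) Y ⊆ Function.update ρ X T Y := by
    intro Y
    by_cases hY : Y = X
    · subst hY; simpa using h1
    · simp [Function.update_of_ne hY]
  exact hT (sem_mono M φ hup hs)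

theorem sem_mu_fixed (M : LTS Act) (φ : Formula Act) (X : ℕ) (ρ : ℕ → Set M.State) :
    sem M (.mu X φ) ρ = sem M φ (Function.update ρ X (sem M (.mu X φ) ρ)) := by
  apply Set.Subset.antisymm
  · apply sem_mu_le
    have h1 : sem M φ (Function.update ρ X (sem M φ (Function.update ρ X (sem M (.mu X φ) ρ))))
        ⊆ sem M φ (Function.update ρ X (sem M (.mu X φ) ρ)) := by
      apply sem_mono
      intro Y
      by_cases hY : Y = X
      · rw [hY]; simpa using sem_mu_prefixed M φ X ρ
      · simp [Function.update_of_ne hY]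
    exact h1
  · exact sem_mu_prefixed M φ X ρ

theorem sem_le_nu (M : LTS Act) (φ : Formula Act) (X : ℕ) (ρ : ℕ → Set M.State)
    {T : Set M.State} (hT : T ⊆ sem M φ (Function.update ρ X T)) :
    T ⊆ sem M (.nu X φ) ρ :=
  Set.subset_sUnion_of_mem hT

theorem sem_nu_postfixed (M : LTS Act) (φ : Formula Act) (X : ℕ) (ρ : ℕ → Set M.State) :
    sem M (.nu X φ) ρ ⊆ sem M φ (Function.update ρ X (sem M (.nu X φ) ρ)) := by
  intro s hs
  obtain ⟨T, hT, hsT⟩ := hs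
  have h1 : T ⊆ sem M (.nu X φ) ρ := sem_le_nu M φ X ρ hT
  have hup : ∀ Y, Function.update ρ X T Y ⊆ Function.update ρ X (sem M (.nu X φ) ρ) Y := by
    intro Y
    by_cases hY : Y = X
    · subst hY; simpa using h1
    · simp [Function.update_of_ne hY]
  exact sem_mono M φ hup (hT hsT)

theorem sem_nu_fixed (M : LTS Act) (φ : Formula Act) (X : ℕ) (ρ : ℕ → Set M.State) :
    sem M (.nu X φ) ρ = sem M φ (Function.update ρ X (sem M (.nu X φ) ρ)) := by
  apply Set.Subset.antisymm
  · exact sem_nu_postfixed M φ X ρ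
  · apply sem_le_nu
    apply sem_mono
    intro Y
    by_cases hY : Y = X
    · rw [hY]; simpa using sem_nu_postfixed M φ X ρ
    · simp [Function.update_of_ne hY]

theorem sem_congr (M : LTS Act) (φ : Formula Act) :
    ∀ {ρ ρ' : ℕ → Set M.State}, (∀ Y ∈ freeVars φ, ρ Y = ρ' Y) → sem M φ ρ = sem M φ ρ' := by
  induction φ with
  | tt => intro ρ ρ' _; rfl
  | ff => intro ρ ρ' _; rfl
  | prop P => intro ρ ρ' _; rfl
  | nprop P => intro ρ ρ' _; rfl
  | var X => intro ρ ρ' h; exact h X rfl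
  | and φ ψ ih1 ih2 =>
      intro ρ ρ' h
      have e1 := ih1 (fun Y hY => h Y (Or.inl hY))
      have e2 := ih2 (fun Y hY => h Y (Or.inr hY))
      show sem M φ _ ∩ sem M ψ _ = _
      rw [e1, e2]; rfl
  | or φ ψ ih1 ih2 =>
      intro ρ ρ' h
      have e1 := ih1 (fun Y hY => h Y (Or.inl hY))
      have e2 := ih2 (fun Y hY => h Y (Or.inr hY))
      show sem M φ _ ∪ sem M ψ _ = _
      rw [e1, e2]; rfl
  | dia a φ ih =>
      intro ρ ρ' h
      have e := ih h
      show {s | ∃ t, M.trans s a t ∧ t ∈ sem M φ _} = _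
      rw [e]; rfl
  | box a φ ih =>
      intro ρ ρ' h
      have e := ih h
      show {s | ∀ t, M.trans s a t → t ∈ sem M φ _} = _
      rw [e]; rfl
  | mu X φ ih =>
      intro ρ ρ' h
      have key : ∀ T : Set M.State,
          sem M φ (Function.update ρ X T) = sem M φ (Function.update ρ' X T) := by
        intro T
        apply ih
        intro Y hY
        by_cases hYX : Y = X
        · subst hYX; simp
        · simp only [Function.update_of_ne hYX]
          exact h Y ⟨hY, hYX⟩
      apply congrArg Set.sInter
      ext T
      show sem M φ (Function.update ρ X T) ⊆ T ↔ sem M φ (Function.update ρ' X T) ⊆ T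
      rw [key T]
  | nu X φ ih =>
      intro ρ ρ' h
      have key : ∀ T : Set M.State,
          sem M φ (Function.update ρ X T) = sem M φ (Function.update ρ' X T) := by
        intro T
        apply ih
        intro Y hY
        by_cases hYX : Y = X
        · subst hYX; simp
        · simp only [Function.update_of_ne hYX]
          exact h Y ⟨hY, hYX⟩
      apply congrArg Set.sUnion
      ext T
      show T ⊆ sem M φ (Function.update ρ X T) ↔ T ⊆ sem M φ (Function.update ρ' X T)
      rw [key T]

end Aux


section Family

open Classical

/-- Encoding of tree nodes as naturals. -/
noncomputable def cd (s : List Bool) : ℕ := Encodable.encode s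

theorem cd_inj : Function.Injective cd := Encodable.encode_injective

/-- The family of structures: full binary trees with `B = prop 1` controlled by
the parameter `x : ℕ → ℕ` and `A = prop 0` true everywhere. -/
@[reducible] def Mx (x : ℕ → ℕ) : LTS Unit where
  State := List Bool
  init := []
  trans := fun s _ t => t = s ++ [false] ∨ t = s ++ [true]
  val := fun s P => P = 0 ∨ (P = 1 ∧ x (cd s) = 1)

theorem Mx_dia (x : ℕ → ℕ) (a : Unit) (φ : Formula Unit) (ρ : ℕ → Set (Mx x).State) :
    sem (Mx x) (.dia a φ) ρ =
      {s | s ++ [false] ∈ sem (Mx x) φ ρ ∨ s ++ [true] ∈ sem (Mx x) φ ρ} := by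
  ext s
  constructor
  · rintro ⟨t, (rfl | rfl), ht⟩
    · exact Or.inl ht
    · exact Or.inr ht
  · rintro (h | h)
    · exact ⟨s ++ [false], Or.inl rfl, h⟩
    · exact ⟨s ++ [true], Or.inr rfl, h⟩

theorem Mx_box (x : ℕ → ℕ) (a : Unit) (φ : Formula Unit) (ρ : ℕ → Set (Mx x).State) :
    sem (Mx x) (.box a φ) ρ =
      {s | s ++ [false] ∈ sem (Mx x) φ ρ ∧ s ++ [true] ∈ sem (Mx x) φ ρ} := by
  ext s
  constructor
  · intro h
    exact ⟨h _ (Or.inl rfl), h _ (Or.inr rfl)⟩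
  · rintro ⟨h1, h2⟩ t (rfl | rfl)
    · exact h1
    · exact h2

/-- Co-continuity of Σ₂-subformulas in the ν-variables, on the finitely
branching structures `Mx x`. -/
theorem coCont (x : ℕ → ℕ) (Ω : ℕ → ℕ) (φ : Formula Unit) (hPA : PA Ω φ)
    (hbd : ∀ X ∈ fixVars φ, Ω X ≤ 1) :
    ∀ (ρ : ℕ → ℕ → Set (Mx x).State),
    (∀ n m, n ≤ m → ∀ X, ρ m X ⊆ ρ n X) →
    (∀ Y, 1 ≤ Ω Y → ∀ n m, ρ n Y = ρ m Y) →
    (⋂ n, sem (Mx x) φ (ρ n)) ⊆ sem (Mx x) φ (fun X => ⋂ n, ρ n X) := by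
  induction φ with
  | tt => intro ρ _ _ s _; trivial
  | ff => intro ρ _ _ s hs; exact (Set.mem_iInter.1 hs 0)
  | prop P => intro ρ _ _ s hs; exact (Set.mem_iInter.1 hs 0)
  | nprop P => intro ρ _ _ s hs; exact (Set.mem_iInter.1 hs 0)
  | var X => intro ρ _ _ s hs; exact Set.mem_iInter.2 (fun n => Set.mem_iInter.1 hs n)
  | and φ ψ ih1 ih2 =>
      intro ρ hanti hvar s hs
      have h1 : s ∈ ⋂ n, sem (Mx x) φ (ρ n) :=
        Set.mem_iInter.2 fun n => (Set.mem_iInter.1 hs n).1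
      have h2 : s ∈ ⋂ n, sem (Mx x) ψ (ρ n) :=
        Set.mem_iInter.2 fun n => (Set.mem_iInter.1 hs n).2
      exact ⟨ih1 hPA.1 (fun X hX => hbd X (Or.inl hX)) ρ hanti hvar h1,
             ih2 hPA.2 (fun X hX => hbd X (Or.inr hX)) ρ hanti hvar h2⟩
  | or φ ψ ih1 ih2 =>
      intro ρ hanti hvar s hs
      have hmono1 : ∀ n m, n ≤ m → sem (Mx x) φ (ρ m) ⊆ sem (Mx x) φ (ρ n) :=
        fun n m hnm => sem_mono (Mx x) φ (hanti n m hnm)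
      have hmono2 : ∀ n m, n ≤ m → sem (Mx x) ψ (ρ m) ⊆ sem (Mx x) ψ (ρ n) :=
        fun n m hnm => sem_mono (Mx x) ψ (hanti n m hnm)
      by_cases hall : ∀ n, s ∈ sem (Mx x) φ (ρ n)
      · exact Or.inl (ih1 hPA.1 (fun X hX => hbd X (Or.inl hX)) ρ hanti hvar
          (Set.mem_iInter.2 hall))
      · push_neg at hall
        obtain ⟨n0, hn0⟩ := hall
        have hB : ∀ n, s ∈ sem (Mx x) ψ (ρ n) := by
          intro n
          have hBn : s ∈ sem (Mx x) ψ (ρ (max n n0)) := by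
            rcases Set.mem_iInter.1 hs (max n n0) with h | h
            · exact absurd (hmono1 n0 (max n n0) (le_max_right _ _) h) hn0
            · exact h
          exact hmono2 n (max n n0) (le_max_left _ _) hBn
        exact Or.inr (ih2 hPA.2 (fun X hX => hbd X (Or.inr hX)) ρ hanti hvar
          (Set.mem_iInter.2 hB))
  | dia a φ ih =>
      intro ρ hanti hvar s hs
      simp only [Mx_dia] at hs ⊢
      rw [Set.mem_setOf_eq]
      have hmono : ∀ n m, n ≤ m → sem (Mx x) φ (ρ m) ⊆ sem (Mx x) φ (ρ n) :=
        fun n m hnm => sem_mono (Mx x) φ (hanti n m hnm)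
      have hs' : ∀ n, s ++ [false] ∈ sem (Mx x) φ (ρ n) ∨ s ++ [true] ∈ sem (Mx x) φ (ρ n) := by
        intro n; exact Set.mem_iInter.1 hs n
      by_cases hall : ∀ n, s ++ [false] ∈ sem (Mx x) φ (ρ n)
      · exact Or.inl (ih hPA hbd ρ hanti hvar (Set.mem_iInter.2 hall))
      · push_neg at hall
        obtain ⟨n0, hn0⟩ := hall
        have hB : ∀ n, s ++ [true] ∈ sem (Mx x) φ (ρ n) := by
          intro n
          have hBn : s ++ [true] ∈ sem (Mx x) φ (ρ (max n n0)) := by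
            rcases hs' (max n n0) with h | h
            · exact absurd (hmono n0 (max n n0) (le_max_right _ _) h) hn0
            · exact h
          exact hmono n (max n n0) (le_max_left _ _) hBn
        exact Or.inr (ih hPA hbd ρ hanti hvar (Set.mem_iInter.2 hB))
  | box a φ ih =>
      intro ρ hanti hvar s hs
      simp only [Mx_box] at hs ⊢
      rw [Set.mem_setOf_eq]
      have h1 : s ++ [false] ∈ ⋂ n, sem (Mx x) φ (ρ n) :=
        Set.mem_iInter.2 fun n => (Set.mem_iInter.1 hs n).1
      have h2 : s ++ [true] ∈ ⋂ n, sem (Mx x) φ (ρ n) :=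
        Set.mem_iInter.2 fun n => (Set.mem_iInter.1 hs n).2
      exact ⟨ih hPA hbd ρ hanti hvar h1, ih hPA hbd ρ hanti hvar h2⟩
  | mu X ψ ih =>
      intro ρ hanti hvar s hs
      have hfv : ∀ Y ∈ freeVars ψ, 1 ≤ Ω Y := by
        intro Y hY
        exact le_trans hPA.1.pos (hPA.2.1 Y hY)
      have hconst : ∀ n, sem (Mx x) (.mu X ψ) (ρ n) = sem (Mx x) (.mu X ψ) (ρ 0) := by
        intro n
        apply sem_congr
        intro Y hY
        exact hvar Y (hfv Y hY.1) n 0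
      have hconst2 : sem (Mx x) (.mu X ψ) (fun X' => ⋂ n, ρ n X')
          = sem (Mx x) (.mu X ψ) (ρ 0) := by
        apply sem_congr
        intro Y hY
        have : ∀ n, ρ n Y = ρ 0 Y := fun n => hvar Y (hfv Y hY.1) n 0
        simp only [this, Set.iInter_const]
      rw [hconst2]
      have := Set.mem_iInter.1 hs 0
      rwa [hconst 0] at this
  | nu Z ψ ih =>
      intro ρ hanti hvar s hs
      have hPAψ : PA Ω ψ := hPA.2.2
      have hbdψ : ∀ X ∈ fixVars ψ, Ω X ≤ 1 := fun X hX => hbd X (Set.mem_insert_iff.2 (Or.inr hX))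
      have hΩZ : Ω Z = 0 := by
        have h1 : Ω Z ≤ 1 := hbd Z (Set.mem_insert _ _)
        obtain ⟨k, hk⟩ := hPA.1
        omega
      set G : ℕ → Set (Mx x).State := fun n => sem (Mx x) (.nu Z ψ) (ρ n) with hG
      have hGanti : ∀ n m, n ≤ m → G m ⊆ G n :=
        fun n m hnm => sem_mono (Mx x) _ (hanti n m hnm)
      apply sem_le_nu (M := Mx x) (T := ⋂ n, G n) _ _ _
      · -- ⋂ G n ⊆ sem ψ (update (⋂ env) Z (⋂ G n))
        set ρ' : ℕ → ℕ → Set (Mx x).State :=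
          fun n => Function.update (ρ n) Z (G n) with hρ'
        have hanti' : ∀ n m, n ≤ m → ∀ X, ρ' m X ⊆ ρ' n X := by
          intro n m hnm X
          by_cases hX : X = Z
          · subst hX; simp only [hρ', Function.update_self]; exact hGanti n m hnm
          · simp only [hρ', Function.update_of_ne hX]; exact hanti n m hnm X
        have hvar' : ∀ Y, 1 ≤ Ω Y → ∀ n m, ρ' n Y = ρ' m Y := by
          intro Y hY n m
          by_cases hX : Y = Z
          · subst hX; omega
          · simp only [hρ', Function.update_of_ne hX]; exact hvar Y hY n m
        have hIH := ih hPAψ hbdψ ρ' hanti' hvar'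
        have hfix : ∀ n, sem (Mx x) ψ (ρ' n) = G n := by
          intro n
          exact (sem_nu_fixed (Mx x) ψ Z (ρ n)).symm
        have hlhs : (⋂ n, G n) ⊆ ⋂ n, sem (Mx x) ψ (ρ' n) := by
          intro t ht
          exact Set.mem_iInter.2 fun n => (hfix n) ▸ (Set.mem_iInter.1 ht n)
        have henv : (fun X => ⋂ n, ρ' n X)
            = Function.update (fun X => ⋂ n, ρ n X) Z (⋂ n, G n) := by
          funext X
          by_cases hX : X = Z
          · subst hX; simp [hρ']
          · simp [hρ', Function.update_of_ne hX]
        calc (⋂ n, G n) ⊆ ⋂ n, sem (Mx x) ψ (ρ' n) := hlhs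
          _ ⊆ sem (Mx x) ψ (fun X => ⋂ n, ρ' n X) := hIH
          _ = _ := by rw [henv]
      · exact Set.mem_iInter.2 fun n => Set.mem_iInter.1 hs n

end Family


section Shapes

open Classical

/-- Baire space, used both as parameter space and as witness space. -/
abbrev Pt : Type := ℕ → ℕ

/-- even part -/
def evp (z : Pt) : Pt := fun n => z (2 * n)
/-- odd part -/
def odp (z : Pt) : Pt := fun n => z (2 * n + 1)
/-- merge -/
def mgp (a b : Pt) : Pt := fun n => if n % 2 = 0 then a (n / 2) else b (n / 2)
/-- tail -/
def tlp (z : Pt) : Pt := fun n => z (n + 1)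
/-- slice -/
def slp (n : ℕ) (z : Pt) : Pt := fun k => z (Nat.pair n k)

theorem evp_mgp (a b : Pt) : evp (mgp a b) = a := by
  funext n; simp [evp, mgp, Nat.mul_div_cancel_left]
theorem odp_mgp (a b : Pt) : odp (mgp a b) = b := by
  funext n
  have h1 : (2 * n + 1) % 2 = 1 := by omega
  have h2 : (2 * n + 1) / 2 = n := by omega
  simp [odp, mgp, h1, h2]

theorem continuous_evp : Continuous evp := by
  apply continuous_pi; intro n; exact continuous_apply _
theorem continuous_odp : Continuous odp := by
  apply continuous_pi; intro n; exact continuous_apply _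
theorem continuous_tlp : Continuous tlp := by
  apply continuous_pi; intro n; exact continuous_apply _
theorem continuous_slp (n : ℕ) : Continuous (slp n) := by
  apply continuous_pi; intro k; exact continuous_apply _

variable {Q : Type} [TopologicalSpace Q]

/-- `A` is "Σ-shaped": uniformly a projection of a closed subset of `Q × Pt`. -/
def SigmaF (A : Q → Set (List Bool)) : Prop :=
  ∃ C : List Bool → Set (Q × Pt), (∀ s, IsClosed (C s)) ∧
    ∀ q s, s ∈ A q ↔ ∃ y : Pt, (q, y) ∈ C s

/-- `A` is "Π-shaped": the complement is Σ-shaped. -/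
def PiF (A : Q → Set (List Bool)) : Prop := SigmaF (fun q => (A q)ᶜ)

theorem sigmaF_of_closed {A : Q → Set (List Bool)}
    (h : ∀ s, IsClosed {q | s ∈ A q}) : SigmaF A := by
  refine ⟨fun s => {p | s ∈ A p.1}, fun s => (h s).preimage continuous_fst, ?_⟩
  intro q s
  exact ⟨fun hq => ⟨(fun _ => 0), hq⟩, fun ⟨y, hy⟩ => hy⟩

theorem piF_of_open {A : Q → Set (List Bool)}
    (h : ∀ s, IsOpen {q | s ∈ A q}) : PiF A := by
  apply sigmaF_of_closed
  intro s
  have : {q | s ∈ (A q)ᶜ} = {q | s ∈ A q}ᶜ := rfl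
  rw [this]
  exact (h s).isClosed_compl

theorem sigmaF_reindex {A : Q → Set (List Bool)} (h : SigmaF A) (f : List Bool → List Bool) :
    SigmaF (fun q => {s | f s ∈ A q}) := by
  obtain ⟨C, hC, hiff⟩ := h
  exact ⟨fun s => C (f s), fun s => hC (f s), fun q s => hiff q (f s)⟩

theorem piF_reindex {A : Q → Set (List Bool)} (h : PiF A) (f : List Bool → List Bool) :
    PiF (fun q => {s | f s ∈ A q}) := sigmaF_reindex h f

theorem sigmaF_precomp {Q' : Type} [TopologicalSpace Q'] {A : Q → Set (List Bool)}
    (h : SigmaF A) {g : Q' → Q} (hg : Continuous g) : SigmaF (fun q' => A (g q')) := by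
  obtain ⟨C, hC, hiff⟩ := h
  refine ⟨fun s => (fun p : Q' × Pt => (g p.1, p.2)) ⁻¹' C s,
    fun s => (hC s).preimage ((hg.comp continuous_fst).prodMk continuous_snd), ?_⟩
  intro q s
  exact hiff (g q) s

theorem piF_precomp {Q' : Type} [TopologicalSpace Q'] {A : Q → Set (List Bool)}
    (h : PiF A) {g : Q' → Q} (hg : Continuous g) : PiF (fun q' => A (g q')) :=
  sigmaF_precomp h hg

theorem sigmaF_inter {A B : Q → Set (List Bool)} (hA : SigmaF A) (hB : SigmaF B) :
    SigmaF (fun q => A q ∩ B q) := by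
  obtain ⟨C, hC, hCiff⟩ := hA
  obtain ⟨D, hD, hDiff⟩ := hB
  refine ⟨fun s => {p | (p.1, evp p.2) ∈ C s ∧ (p.1, odp p.2) ∈ D s}, ?_, ?_⟩
  · intro s
    have h1 : Continuous (fun p : Q × Pt => (p.1, evp p.2)) :=
      continuous_fst.prodMk (continuous_evp.comp continuous_snd)
    have h2 : Continuous (fun p : Q × Pt => (p.1, odp p.2)) :=
      continuous_fst.prodMk (continuous_odp.comp continuous_snd)
    exact IsClosed.inter ((hC s).preimage h1) ((hD s).preimage h2)
  · intro q s
    constructor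
    · rintro ⟨h1, h2⟩
      obtain ⟨y1, hy1⟩ := (hCiff q s).1 h1
      obtain ⟨y2, hy2⟩ := (hDiff q s).1 h2
      exact ⟨mgp y1 y2, by rw [Set.mem_setOf_eq, evp_mgp, odp_mgp]; exact ⟨hy1, hy2⟩⟩
    · rintro ⟨y, hy1, hy2⟩
      exact ⟨(hCiff q s).2 ⟨evp y, hy1⟩, (hDiff q s).2 ⟨odp y, hy2⟩⟩

theorem sigmaF_union {A B : Q → Set (List Bool)} (hA : SigmaF A) (hB : SigmaF B) :
    SigmaF (fun q => A q ∪ B q) := by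
  obtain ⟨C, hC, hCiff⟩ := hA
  obtain ⟨D, hD, hDiff⟩ := hB
  have h1 : Continuous (fun p : Q × Pt => (p.1, tlp p.2)) :=
    continuous_fst.prodMk (continuous_tlp.comp continuous_snd)
  have h0 : Continuous (fun p : Q × Pt => p.2 0) :=
    (continuous_apply 0).comp continuous_snd
  refine ⟨fun s => ({p | p.2 0 = 0} ∩ {p | (p.1, tlp p.2) ∈ C s}) ∪
      ({p | p.2 0 ≠ 0} ∩ {p | (p.1, tlp p.2) ∈ D s}), ?_, ?_⟩
  · intro s
    have hcl0 : IsClosed {p : Q × Pt | p.2 0 = 0} := isClosed_eq h0 continuous_const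
    have hop0 : IsOpen {p : Q × Pt | p.2 0 = 0} := by
      have : {p : Q × Pt | p.2 0 = 0} = (fun p : Q × Pt => p.2 0) ⁻¹' {0} := rfl
      rw [this]; exact (isOpen_discrete _).preimage h0
    exact IsClosed.union (hcl0.inter ((hC s).preimage h1))
      ((isClosed_compl_iff.2 hop0).inter ((hD s).preimage h1))
  · intro q s
    constructor
    · rintro (h | h)
      · obtain ⟨y, hy⟩ := (hCiff q s).1 h
        refine ⟨fun n => if n = 0 then 0 else y (n - 1), Or.inl ⟨rfl, ?_⟩⟩
        have : tlp (fun n => if n = 0 then 0 else y (n - 1)) = y := by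
          funext n; simp [tlp]
        rw [Set.mem_setOf_eq, this]; exact hy
      · obtain ⟨y, hy⟩ := (hDiff q s).1 h
        refine ⟨fun n => if n = 0 then 1 else y (n - 1), Or.inr ⟨by simp, ?_⟩⟩
        have : tlp (fun n => if n = 0 then (1 : ℕ) else y (n - 1)) = y := by
          funext n; simp [tlp]
        rw [Set.mem_setOf_eq, this]; exact hy
    · rintro ⟨y, (⟨_, hy⟩ | ⟨_, hy⟩)⟩
      · exact Or.inl ((hCiff q s).2 ⟨tlp y, hy⟩)
      · exact Or.inr ((hDiff q s).2 ⟨tlp y, hy⟩)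

theorem sigmaF_iInter {A : ℕ → Q → Set (List Bool)} (hA : ∀ n, SigmaF (A n)) :
    SigmaF (fun q => ⋂ n, A n q) := by
  choose C hC hCiff using hA
  refine ⟨fun s => ⋂ n, (fun p : Q × Pt => (p.1, slp n p.2)) ⁻¹' C n s, ?_, ?_⟩
  · intro s
    exact isClosed_iInter fun n => (hC n s).preimage
      (continuous_fst.prodMk ((continuous_slp n).comp continuous_snd))
  · intro q s
    constructor
    · intro h
      have h' : ∀ n, ∃ y, (q, y) ∈ C n s := fun n => (hCiff n q s).1 (Set.mem_iInter.1 h n)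
      choose Y hY using h'
      refine ⟨fun m => Y m.unpair.1 m.unpair.2, Set.mem_iInter.2 fun n => ?_⟩
      have : slp n (fun m => Y m.unpair.1 m.unpair.2) = Y n := by
        funext k; simp [slp, Nat.unpair_pair]
      simpa [Set.mem_preimage, this] using hY n
    · intro ⟨y, hy⟩
      exact Set.mem_iInter.2 fun n => (hCiff n q s).2 ⟨slp n y, Set.mem_iInter.1 hy n⟩

theorem sigmaF_iUnion {A : ℕ → Q → Set (List Bool)} (hA : ∀ n, SigmaF (A n)) :
    SigmaF (fun q => ⋃ n, A n q) := by
  choose C hC hCiff using hA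
  have h1 : Continuous (fun p : Q × Pt => (p.1, tlp p.2)) :=
    continuous_fst.prodMk (continuous_tlp.comp continuous_snd)
  have h0 : Continuous (fun p : Q × Pt => p.2 0) :=
    (continuous_apply 0).comp continuous_snd
  refine ⟨fun s => {p | (p.1, tlp p.2) ∈ C (p.2 0) s}, ?_, ?_⟩
  · intro s
    rw [← isOpen_compl_iff]
    have : {p : Q × Pt | (p.1, tlp p.2) ∈ C (p.2 0) s}ᶜ
        = ⋃ n, ({p : Q × Pt | p.2 0 = n} ∩ {p | (p.1, tlp p.2) ∈ (C n s)ᶜ}) := by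
      ext p
      simp only [Set.mem_compl_iff, Set.mem_setOf_eq, Set.mem_iUnion, Set.mem_inter_iff]
      constructor
      · intro h; exact ⟨p.2 0, rfl, h⟩
      · rintro ⟨n, rfl, h⟩; exact h
    rw [this]
    apply isOpen_iUnion
    intro n
    have hop : IsOpen {p : Q × Pt | p.2 0 = n} := by
      have : {p : Q × Pt | p.2 0 = n} = (fun p : Q × Pt => p.2 0) ⁻¹' {n} := rfl
      rw [this]; exact (isOpen_discrete _).preimage h0
    exact hop.inter (((hC n s).isOpen_compl).preimage h1)
  · intro q s
    constructor
    · intro h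
      obtain ⟨n, hn⟩ := Set.mem_iUnion.1 h
      obtain ⟨y, hy⟩ := (hCiff n q s).1 hn
      refine ⟨fun m => if m = 0 then n else y (m - 1), ?_⟩
      have ht : tlp (fun m => if m = 0 then n else y (m - 1)) = y := by
        funext m; simp [tlp]
      simp only [Set.mem_setOf_eq, ht]
      simpa using hy
    · rintro ⟨y, hy⟩
      exact Set.mem_iUnion.2 ⟨y 0, (hCiff (y 0) q s).2 ⟨tlp y, hy⟩⟩

theorem piF_inter {A B : Q → Set (List Bool)} (hA : PiF A) (hB : PiF B) :
    PiF (fun q => A q ∩ B q) := by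
  have := sigmaF_union hA hB
  unfold PiF
  convert this using 2 with q
  simp [Set.compl_inter]

theorem piF_union {A B : Q → Set (List Bool)} (hA : PiF A) (hB : PiF B) :
    PiF (fun q => A q ∪ B q) := by
  have := sigmaF_inter hA hB
  unfold PiF
  convert this using 2 with q
  simp [Set.compl_union]

theorem piF_iInter {A : ℕ → Q → Set (List Bool)} (hA : ∀ n, PiF (A n)) :
    PiF (fun q => ⋂ n, A n q) := by
  have := sigmaF_iUnion hA
  unfold PiF
  convert this using 2 with q
  simp [Set.compl_iInter]

theorem sigmaF_exists {H : (Q × Pt) → Set (List Bool)} (h : SigmaF H) :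
    SigmaF (fun q => {s | ∃ τ : Pt, s ∈ H (q, τ)}) := by
  obtain ⟨C, hC, hCiff⟩ := h
  refine ⟨fun s => {p | ((p.1, evp p.2), odp p.2) ∈ C s}, ?_, ?_⟩
  · intro s
    have hcont : Continuous (fun p : Q × Pt => ((p.1, evp p.2), odp p.2)) :=
      (continuous_fst.prodMk (continuous_evp.comp continuous_snd)).prodMk
        (continuous_odp.comp continuous_snd)
    exact (hC s).preimage hcont
  · intro q s
    constructor
    · rintro ⟨τ, hτ⟩
      obtain ⟨y, hy⟩ := (hCiff (q, τ) s).1 hτ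
      refine ⟨mgp τ y, ?_⟩
      rw [Set.mem_setOf_eq, evp_mgp, odp_mgp]
      exact hy
    · rintro ⟨z, hz⟩
      exact ⟨evp z, (hCiff (q, evp z) s).2 ⟨odp z, hz⟩⟩

theorem piF_univ : PiF (fun _ : Q => (Set.univ : Set (List Bool))) := by
  apply sigmaF_of_closed
  intro s
  have : {q : Q | s ∈ (Set.univ : Set (List Bool))ᶜ} = ∅ := by simp
  rw [this]; exact isClosed_empty

end Shapes


section Main

open Classical

theorem sigmaF_congr {Q : Type} [TopologicalSpace Q] {A B : Q → Set (List Bool)}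
    (h : ∀ q, A q = B q) (hA : SigmaF A) : SigmaF B := by
  have : A = B := funext h
  rwa [← this]

theorem piF_congr {Q : Type} [TopologicalSpace Q] {A B : Q → Set (List Bool)}
    (h : ∀ q, A q = B q) (hA : PiF A) : PiF B := by
  have : A = B := funext h
  rwa [← this]

/-- decoding a subset of states from a point of Baire space -/
def decT (τ : Pt) : Set (List Bool) := {s | τ (cd s) = 1}

theorem decT_surj (T : Set (List Bool)) : ∃ τ : Pt, decT τ = T := by
  refine ⟨fun n => if ∃ s, cd s = n ∧ s ∈ T then 1 else 0, ?_⟩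
  ext s
  simp only [decT, Set.mem_setOf_eq]
  by_cases h : ∃ s', cd s' = cd s ∧ s' ∈ T
  · rw [if_pos h]
    obtain ⟨s', hs', hsT⟩ := h
    have hss : s' = s := cd_inj hs'
    subst hss
    simp [hsT]
  · rw [if_neg h]
    simp only [Nat.zero_ne_one, false_iff]
    intro hsT
    exact h ⟨s, rfl, hsT⟩

/-- characterization of the μ-clause via an encoded universal quantifier -/
theorem mu_forall (x : Pt) (ψ : Formula Unit) (X : ℕ) (ρ0 : ℕ → Set (List Bool))
    (s : List Bool) :
    s ∈ sem (Mx x) (.mu X ψ) ρ0 ↔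
      ∀ τ : Pt, sem (Mx x) ψ (Function.update ρ0 X (decT τ)) ⊆ decT τ → s ∈ decT τ := by
  constructor
  · intro hs τ hτ
    exact sem_mu_le (Mx x) ψ X ρ0 hτ hs
  · intro h
    obtain ⟨τ0, hτ0⟩ := decT_surj (sem (Mx x) (.mu X ψ) ρ0)
    have := h τ0 (by rw [hτ0]; exact sem_mu_prefixed (Mx x) ψ X ρ0)
    rwa [hτ0] at this

/-- approximants of the ν-clause -/
def GIter (x : Pt) (ψ : Formula Unit) (Z : ℕ) (ρ0 : ℕ → Set (List Bool)) :
    ℕ → Set (List Bool)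
  | 0 => Set.univ
  | n + 1 => sem (Mx x) ψ (Function.update ρ0 Z (GIter x ψ Z ρ0 n))

theorem GIter_anti (x : Pt) (ψ : Formula Unit) (Z : ℕ) (ρ0 : ℕ → Set (List Bool)) :
    ∀ n m, n ≤ m → GIter x ψ Z ρ0 m ⊆ GIter x ψ Z ρ0 n := by
  have key : ∀ n, GIter x ψ Z ρ0 (n + 1) ⊆ GIter x ψ Z ρ0 n := by
    intro n
    induction n with
    | zero => intro t _; trivial
    | succ n ih =>
        show sem (Mx x) ψ _ ⊆ sem (Mx x) ψ _
        apply sem_mono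
        intro Y
        by_cases hY : Y = Z
        · subst hY; simpa using ih
        · simp [Function.update_of_ne hY]
  intro n m hnm
  induction hnm with
  | refl => exact subset_rfl
  | step h ih => exact (key _).trans ih

/-- the ν-clause is reached in `ω` steps on `Mx x` -/
theorem nu_iterates (x : Pt) (Ω : ℕ → ℕ) (Z : ℕ) (ψ : Formula Unit)
    (hPA : PA Ω (.nu Z ψ)) (hbd : ∀ X ∈ fixVars (Formula.nu Z ψ), Ω X ≤ 1)
    (ρ0 : ℕ → Set (List Bool)) :
    sem (Mx x) (.nu Z ψ) ρ0 = ⋂ n, GIter x ψ Z ρ0 n := by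
  have hanti := GIter_anti x ψ Z ρ0
  apply Set.Subset.antisymm
  · apply Set.subset_iInter
    intro n
    induction n with
    | zero => intro t _; trivial
    | succ n ih =>
        show sem (Mx x) (.nu Z ψ) ρ0 ⊆ sem (Mx x) ψ (Function.update ρ0 Z (GIter x ψ Z ρ0 n))
        calc sem (Mx x) (.nu Z ψ) ρ0
            = sem (Mx x) ψ (Function.update ρ0 Z (sem (Mx x) (.nu Z ψ) ρ0)) :=
              sem_nu_fixed (Mx x) ψ Z ρ0
          _ ⊆ sem (Mx x) ψ (Function.update ρ0 Z (GIter x ψ Z ρ0 n)) := by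
              apply sem_mono
              intro Y
              by_cases hY : Y = Z
              · subst hY; simpa using ih
              · simp [Function.update_of_ne hY]
  · apply sem_le_nu
    set ρc : ℕ → ℕ → Set (List Bool) := fun n => Function.update ρ0 Z (GIter x ψ Z ρ0 n) with hρc
    have hΩZ : Ω Z = 0 := by
      have h1 : Ω Z ≤ 1 := hbd Z (Set.mem_insert _ _)
      obtain ⟨k, hk⟩ := hPA.1
      omega
    have hcc := coCont x Ω ψ hPA.2.2
      (fun X hX => hbd X (Set.mem_insert_iff.2 (Or.inr hX))) ρc
      (by
        intro n m hnm X
        by_cases hX : X = Z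
        · subst hX; simp only [hρc, Function.update_self]; exact hanti n m hnm
        · simp only [hρc, Function.update_of_ne hX]; exact subset_rfl)
      (by
        intro Y hY n m
        by_cases hX : Y = Z
        · subst hX; omega
        · simp only [hρc, Function.update_of_ne hX])
    have h1 : (⋂ n, GIter x ψ Z ρ0 n) ⊆ ⋂ n, sem (Mx x) ψ (ρc n) := by
      intro t ht
      apply Set.mem_iInter.2
      intro n
      have he : sem (Mx x) ψ (ρc n) = GIter x ψ Z ρ0 (n + 1) := rfl
      rw [he]
      exact Set.mem_iInter.1 ht (n + 1)
    have henv : (fun X => ⋂ n, ρc n X) = Function.update ρ0 Z (⋂ n, GIter x ψ Z ρ0 n) := by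
      funext X
      by_cases hX : X = Z
      · subst hX; simp [hρc]
      · simp [hρc, Function.update_of_ne hX, Set.iInter_const]
    calc (⋂ n, GIter x ψ Z ρ0 n) ⊆ ⋂ n, sem (Mx x) ψ (ρc n) := h1
      _ ⊆ sem (Mx x) ψ (fun X => ⋂ n, ρc n X) := hcc
      _ = sem (Mx x) ψ (Function.update ρ0 Z (⋂ n, GIter x ψ Z ρ0 n)) := by rw [henv]

/-- surjective enumeration of states -/
noncomputable def enumS (n : ℕ) : List Bool := (Encodable.decode (α := List Bool) n).getD []

theorem enumS_surj : Function.Surjective enumS := by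
  intro s
  exact ⟨Encodable.encode s, by simp [enumS]⟩

/-- MAIN INDUCTION: on the family `Mx`, the semantics of a `Σμ2` formula is
Π-shaped in the parameter. -/
theorem main_induction (Ω : ℕ → ℕ) (φ : Formula Unit) (hPA : PA Ω φ)
    (hbd : ∀ X ∈ fixVars φ, Ω X ≤ 1) :
    ∀ (Q : Type) [TopologicalSpace Q] (g : Q → Pt), Continuous g →
    ∀ (ρ : ℕ → Q → Set (List Bool)), (∀ X, PiF (ρ X)) →
      PiF (fun q => sem (Mx (g q)) φ (fun X => ρ X q)) := by
  induction φ with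
  | tt =>
      intro Q _ g hg ρ hρ
      exact piF_univ
  | ff =>
      intro Q _ g hg ρ hρ
      apply piF_of_open
      intro s
      have : {q : Q | s ∈ sem (Mx (g q)) Formula.ff (fun X => ρ X q)} = ∅ := by
        ext q; simp [sem]
      rw [this]; exact isOpen_empty
  | prop P =>
      intro Q _ g hg ρ hρ
      apply piF_of_open
      intro s
      have he : {q : Q | s ∈ sem (Mx (g q)) (Formula.prop P) (fun X => ρ X q)}
          = {q : Q | P = 0 ∨ (P = 1 ∧ g q (cd s) = 1)} := rfl
      rw [he]
      rcases Nat.eq_zero_or_pos P with h0 | hpos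
      · subst h0
        have : {q : Q | (0:ℕ) = 0 ∨ ((0:ℕ) = 1 ∧ g q (cd s) = 1)} = Set.univ := by
          ext q; simp
        rw [this]; exact isOpen_univ
      · by_cases h1 : P = 1
        · subst h1
          have : {q : Q | (1:ℕ) = 0 ∨ ((1:ℕ) = 1 ∧ g q (cd s) = 1)}
              = (fun q => g q (cd s)) ⁻¹' {1} := by
            ext q; simp
          rw [this]
          exact (isOpen_discrete _).preimage ((continuous_apply (cd s)).comp hg)
        · have : {q : Q | P = 0 ∨ (P = 1 ∧ g q (cd s) = 1)} = ∅ := by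
            ext q; simp; omega
          rw [this]; exact isOpen_empty
  | nprop P =>
      intro Q _ g hg ρ hρ
      apply piF_of_open
      intro s
      have he : {q : Q | s ∈ sem (Mx (g q)) (Formula.nprop P) (fun X => ρ X q)}
          = {q : Q | ¬ (P = 0 ∨ (P = 1 ∧ g q (cd s) = 1))} := rfl
      rw [he]
      rcases Nat.eq_zero_or_pos P with h0 | hpos
      · subst h0
        have : {q : Q | ¬ ((0:ℕ) = 0 ∨ ((0:ℕ) = 1 ∧ g q (cd s) = 1))} = ∅ := by
          ext q; simp
        rw [this]; exact isOpen_empty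
      · by_cases h1 : P = 1
        · subst h1
          have : {q : Q | ¬ ((1:ℕ) = 0 ∨ ((1:ℕ) = 1 ∧ g q (cd s) = 1))}
              = (fun q => g q (cd s)) ⁻¹' {1}ᶜ := by
            ext q; simp
          rw [this]
          exact (isOpen_discrete _).preimage ((continuous_apply (cd s)).comp hg)
        · have : {q : Q | ¬ (P = 0 ∨ (P = 1 ∧ g q (cd s) = 1))} = Set.univ := by
            ext q; simp; omega
          rw [this]; exact isOpen_univ
  | var X =>
      intro Q _ g hg ρ hρ
      exact hρ X
  | and φ ψ ih1 ih2 =>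
      intro Q _ g hg ρ hρ
      have h1 := ih1 hPA.1 (fun X hX => hbd X (Or.inl hX)) Q g hg ρ hρ
      have h2 := ih2 hPA.2 (fun X hX => hbd X (Or.inr hX)) Q g hg ρ hρ
      exact piF_inter h1 h2
  | or φ ψ ih1 ih2 =>
      intro Q _ g hg ρ hρ
      have h1 := ih1 hPA.1 (fun X hX => hbd X (Or.inl hX)) Q g hg ρ hρ
      have h2 := ih2 hPA.2 (fun X hX => hbd X (Or.inr hX)) Q g hg ρ hρ
      exact piF_union h1 h2
  | dia a φ ih =>
      intro Q _ g hg ρ hρ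
      have h1 := ih hPA hbd Q g hg ρ hρ
      have hf := piF_reindex h1 (fun s => s ++ [false])
      have ht := piF_reindex h1 (fun s => s ++ [true])
      apply piF_congr (A := fun q =>
        {s | s ++ [false] ∈ sem (Mx (g q)) φ (fun X => ρ X q)} ∪
        {s | s ++ [true] ∈ sem (Mx (g q)) φ (fun X => ρ X q)})
      · intro q
        rw [Mx_dia]
        ext s
        simp [Set.mem_union, Set.mem_setOf_eq]
      · exact piF_union hf ht
  | box a φ ih =>
      intro Q _ g hg ρ hρ
      have h1 := ih hPA hbd Q g hg ρ hρ
      have hf := piF_reindex h1 (fun s => s ++ [false])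
      have ht := piF_reindex h1 (fun s => s ++ [true])
      apply piF_congr (A := fun q =>
        {s | s ++ [false] ∈ sem (Mx (g q)) φ (fun X => ρ X q)} ∩
        {s | s ++ [true] ∈ sem (Mx (g q)) φ (fun X => ρ X q)})
      · intro q
        rw [Mx_box]
        ext s
        simp [Set.mem_inter_iff, Set.mem_setOf_eq]
      · exact piF_inter hf ht
  | mu X ψ ih =>
      intro Q _ g hg ρ hρ
      set ρ' : ℕ → Q × Pt → Set (List Bool) :=
        fun X' => if X' = X then (fun p => decT p.2) else (fun p => ρ X' p.1) with hρ'
      have hρ'Pi : ∀ X', PiF (ρ' X') := by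
        intro X'
        by_cases hX' : X' = X
        · subst hX'
          simp only [hρ', if_pos rfl]
          apply piF_of_open
          intro s
          have : {p : Q × Pt | s ∈ decT p.2} = (fun p : Q × Pt => p.2 (cd s)) ⁻¹' {1} := rfl
          rw [this]
          exact (isOpen_discrete _).preimage ((continuous_apply (cd s)).comp continuous_snd)
        · simp only [hρ', if_neg hX']
          exact piF_precomp (hρ X') continuous_fst
      have hB := ih hPA.2.2 (fun X' hX' => hbd X' (Set.mem_insert_iff.2 (Or.inr hX')))
        (Q × Pt) (g ∘ Prod.fst) (hg.comp continuous_fst) ρ' hρ'Pi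
      set B : Q × Pt → Set (List Bool) :=
        fun p => sem (Mx ((g ∘ Prod.fst) p)) ψ (fun X' => ρ' X' p) with hBdef
      have hBc : SigmaF (fun p => (B p)ᶜ) := hB
      have hImp : ∀ s' : List Bool, SigmaF (fun p : Q × Pt =>
          ({_s | s' ∈ B p → s' ∈ decT p.2} : Set (List Bool))) := by
        intro s'
        have h1 : SigmaF (fun p : Q × Pt => ({_s | s' ∉ B p} : Set (List Bool))) := by
          have h0 := sigmaF_reindex hBc (fun _ => s')
          apply sigmaF_congr _ h0
          intro p
          rfl
        have h2 : SigmaF (fun p : Q × Pt => ({_s | s' ∈ decT p.2} : Set (List Bool))) := by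
          apply sigmaF_of_closed
          intro s
          exact isClosed_eq ((continuous_apply (cd s')).comp continuous_snd) continuous_const
        have h3 := sigmaF_union h1 h2
        apply sigmaF_congr _ h3
        intro p
        ext s
        simp only [Set.mem_union, Set.mem_setOf_eq]
        tauto
      have hAll : SigmaF (fun p : Q × Pt =>
          ({_s | ∀ s' : List Bool, s' ∈ B p → s' ∈ decT p.2} : Set (List Bool))) := by
        have h3 := sigmaF_iInter (A := fun n p =>
          ({_s | enumS n ∈ B p → enumS n ∈ decT p.2} : Set (List Bool))) (fun n => hImp (enumS n))
        apply sigmaF_congr _ h3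
        intro p
        ext s
        simp only [Set.mem_iInter, Set.mem_setOf_eq]
        constructor
        · intro h s' hs'
          obtain ⟨n, rfl⟩ := enumS_surj s'
          exact h n hs'
        · intro h n
          exact h (enumS n)
      have hNot : SigmaF (fun p : Q × Pt => ({s | s ∉ decT p.2} : Set (List Bool))) := by
        apply sigmaF_of_closed
        intro s
        have : {p : Q × Pt | s ∈ {s | s ∉ decT p.2}} = (fun p : Q × Pt => p.2 (cd s)) ⁻¹' {1}ᶜ := by
          ext p
          simp [decT]
        rw [this]
        exact (isClosed_compl_iff.2 (isOpen_discrete _)).preimage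
          ((continuous_apply (cd s)).comp continuous_snd)
      have hK : SigmaF (fun p : Q × Pt =>
          {s | (∀ s' : List Bool, s' ∈ B p → s' ∈ decT p.2) ∧ s ∉ decT p.2}) := by
        have h3 := sigmaF_inter hAll hNot
        apply sigmaF_congr _ h3
        intro p
        ext s
        simp only [Set.mem_inter_iff, Set.mem_setOf_eq]
      have hEx := sigmaF_exists hK
      show SigmaF _
      apply sigmaF_congr _ hEx
      intro q
      ext s
      simp only [Set.mem_setOf_eq, Set.mem_compl_iff]
      rw [mu_forall]
      rw [not_forall]
      have henvgen : ∀ τ : Pt, (fun X' => ρ' X' (q, τ))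
          = Function.update (fun X' => ρ X' q) X (decT τ) := by
        intro τ
        funext X'
        by_cases hX' : X' = X
        · subst hX'; simp [hρ']
        · simp [hρ', if_neg hX', Function.update_of_ne hX']
      have hBgen : ∀ τ : Pt, B (q, τ)
          = sem (Mx (g q)) ψ (Function.update (fun X' => ρ X' q) X (decT τ)) := by
        intro τ
        show sem (Mx (g q)) ψ (fun X' => ρ' X' (q, τ)) = _
        rw [henvgen τ]
      constructor
      · rintro ⟨τ, h1, h2⟩
        refine ⟨τ, ?_⟩
        rw [Classical.not_imp]
        refine ⟨?_, h2⟩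
        intro s' hs'
        apply h1 s'
        rw [hBgen τ]
        exact hs'
      · rintro ⟨τ, hτ⟩
        rw [Classical.not_imp] at hτ
        obtain ⟨hsub, hns⟩ := hτ
        refine ⟨τ, ?_, hns⟩
        intro s' hs'
        apply hsub
        rw [hBgen τ] at hs'
        exact hs'
  | nu Z ψ ih =>
      intro Q _ g hg ρ hρ
      have hNPi : ∀ n, PiF (fun q => GIter (g q) ψ Z (fun X' => ρ X' q) n) := by
        intro n
        induction n with
        | zero => exact piF_univ
        | succ n ihn =>
            set ρ2 : ℕ → Q → Set (List Bool) :=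
              fun X' => if X' = Z then (fun q => GIter (g q) ψ Z (fun X'' => ρ X'' q) n)
                else ρ X' with hρ2
            have hρ2Pi : ∀ X', PiF (ρ2 X') := by
              intro X'
              by_cases hX' : X' = Z
              · subst hX'; simp only [hρ2, if_pos rfl]; exact ihn
              · simp only [hρ2, if_neg hX']; exact hρ X'
            have h4 := ih hPA.2.2 (fun X' hX' => hbd X' (Set.mem_insert_iff.2 (Or.inr hX')))
              Q g hg ρ2 hρ2Pi
            apply piF_congr _ h4
            intro q
            show sem (Mx (g q)) ψ (fun X' => ρ2 X' q)
              = GIter (g q) ψ Z (fun X' => ρ X' q) (n + 1)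
            show sem (Mx (g q)) ψ (fun X' => ρ2 X' q)
              = sem (Mx (g q)) ψ (Function.update (fun X' => ρ X' q) Z
                  (GIter (g q) ψ Z (fun X' => ρ X' q) n))
            apply sem_congr
            intro Y _
            by_cases hY : Y = Z
            · subst hY; simp [hρ2]
            · simp [hρ2, if_neg hY, Function.update_of_ne hY]
      have h5 := piF_iInter hNPi
      apply piF_congr _ h5
      intro q
      exact (nu_iterates (g q) Ω Z ψ hPA hbd (fun X' => ρ X' q)).symm

end Main


section PsiSem

open Classical

/-- the example formula -/
def PsiBody : Formula Unit :=
  .or (.and (.prop 0) (.dia () (.var 1))) (.and (.prop 1) (.dia () (.var 0)))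

def Psi : Formula Unit := .nu 0 (.mu 1 PsiBody)

theorem semBody_eq (x : Pt) (Y T : Set (List Bool)) :
    sem (Mx x) PsiBody
      (Function.update (Function.update (fun _ => (∅ : Set (List Bool))) 0 Y) 1 T)
    = {v | (v ++ [false] ∈ T ∨ v ++ [true] ∈ T)
        ∨ (x (cd v) = 1 ∧ (v ++ [false] ∈ Y ∨ v ++ [true] ∈ Y))} := by
  set ρ := Function.update (Function.update (fun _ => (∅ : Set (List Bool))) 0 Y) 1 T with hρ
  have hρ1 : ρ 1 = T := by simp [hρ]
  have hρ0 : ρ 0 = Y := by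
    rw [hρ, Function.update_of_ne (by norm_num), Function.update_self]
  have e1 : sem (Mx x) (.dia () (.var 1)) ρ = {s | s ++ [false] ∈ T ∨ s ++ [true] ∈ T} := by
    rw [Mx_dia]
    show {s | s ++ [false] ∈ ρ 1 ∨ s ++ [true] ∈ ρ 1} = _
    rw [hρ1]
  have e0 : sem (Mx x) (.dia () (.var 0)) ρ = {s | s ++ [false] ∈ Y ∨ s ++ [true] ∈ Y} := by
    rw [Mx_dia]
    show {s | s ++ [false] ∈ ρ 0 ∨ s ++ [true] ∈ ρ 0} = _
    rw [hρ0]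
  show (sem (Mx x) (.prop 0) ρ ∩ sem (Mx x) (.dia () (.var 1)) ρ)
      ∪ (sem (Mx x) (.prop 1) ρ ∩ sem (Mx x) (.dia () (.var 0)) ρ) = _
  rw [e1, e0]
  ext v
  have hv0 : v ∈ sem (Mx x) (.prop 0) ρ := Or.inl rfl
  constructor
  · rintro (⟨_, h⟩ | ⟨hB, h⟩)
    · exact Or.inl h
    · refine Or.inr ⟨?_, h⟩
      rcases hB with h' | h'
      · exact absurd h' (by norm_num)
      · exact h'.2
  · rintro (h | ⟨hB, h⟩)
    · exact Or.inl ⟨hv0, h⟩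
    · exact Or.inr ⟨Or.inr ⟨rfl, hB⟩, h⟩

/-- the inner μ: reach a `B`-node with a successor in `Y` -/
theorem semMu_eq (x : Pt) (Y : Set (List Bool)) :
    sem (Mx x) (.mu 1 PsiBody) (Function.update (fun _ => (∅ : Set (List Bool))) 0 Y)
    = {v | ∃ u, v <+: u ∧ x (cd u) = 1 ∧ (u ++ [false] ∈ Y ∨ u ++ [true] ∈ Y)} := by
  set ρ0 := Function.update (fun _ => (∅ : Set (List Bool))) 0 Y with hρ0
  set R : Set (List Bool) :=
    {v | ∃ u, v <+: u ∧ x (cd u) = 1 ∧ (u ++ [false] ∈ Y ∨ u ++ [true] ∈ Y)} with hR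
  set L : Set (List Bool) := sem (Mx x) (.mu 1 PsiBody) ρ0 with hL
  have hLfix : sem (Mx x) PsiBody (Function.update ρ0 1 L) = L :=
    (sem_mu_fixed (Mx x) PsiBody 1 ρ0).symm
  apply Set.Subset.antisymm
  · -- L ⊆ R : R is a prefixed point
    apply sem_mu_le
    rw [semBody_eq]
    rintro v (⟨h | h⟩ | ⟨hB, h⟩)
    · obtain ⟨u, hpre, hu⟩ := h
      exact ⟨u, (List.prefix_append v [false]).trans hpre, hu⟩
    · obtain ⟨u, hpre, hu⟩ := h
      exact ⟨u, (List.prefix_append v [true]).trans hpre, hu⟩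
    · exact ⟨v, List.prefix_rfl, hB, h⟩
  · -- R ⊆ L
    have aux : ∀ (t v : List Bool), x (cd (v ++ t)) = 1 →
        ((v ++ t) ++ [false] ∈ Y ∨ (v ++ t) ++ [true] ∈ Y) → v ∈ L := by
      intro t
      induction t with
      | nil =>
          intro v hB hY
          rw [← hLfix, semBody_eq]
          simp only [List.append_nil] at hB hY
          exact Or.inr ⟨hB, hY⟩
      | cons b t iht =>
          intro v hB hY
          have hvb : v ++ b :: t = (v ++ [b]) ++ t := by simp
          have hc : (v ++ [b]) ∈ L := by
            refine iht (v ++ [b]) ?_ ?_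
            · rw [← hvb]; exact hB
            · rw [← hvb]; exact hY
          rw [← hLfix, semBody_eq]
          cases b
          · exact Or.inl (Or.inl hc)
          · exact Or.inl (Or.inr hc)
    rintro v ⟨u, hpre, hB, hY⟩
    obtain ⟨t, rfl⟩ := hpre
    exact aux t v hB hY
  
/-- Satisfaction of `Psi` on `Mx x` is existence of an infinite `B`-chain. -/
theorem psi_iff (x : Pt) :
    Sat (Mx x) Psi ↔ ∃ g : ℕ → List Bool,
      (∀ i, g i <+: g (i + 1) ∧ g i ≠ g (i + 1)) ∧ (∀ i, x (cd (g i)) = 1) := by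
  constructor
  · intro hsat
    -- extract the chain
    set Y : Set (List Bool) := sem (Mx x) Psi (fun _ => ∅) with hY
    have hpost : Y ⊆ sem (Mx x) (.mu 1 PsiBody)
        (Function.update (fun _ => (∅ : Set (List Bool))) 0 Y) := by
      have := sem_nu_postfixed (Mx x) (.mu 1 PsiBody) 0 (fun _ => ∅)
      exact this
    rw [semMu_eq] at hpost
    have key : ∀ v ∈ Y, ∃ u b, v <+: u ∧ x (cd u) = 1 ∧ u ++ [b] ∈ Y := by
      intro v hv
      obtain ⟨u, hpre, hB, hY'⟩ := hpost hv
      rcases hY' with h | h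
      · exact ⟨u, false, hpre, hB, h⟩
      · exact ⟨u, true, hpre, hB, h⟩
    choose uf bf h1 h2 h3 using key
    have hinit : [] ∈ Y := hsat
    set vs : ℕ → {v : List Bool // v ∈ Y} := fun n =>
      Nat.rec (motive := fun _ => {v : List Bool // v ∈ Y}) ⟨[], hinit⟩
        (fun _ p => ⟨uf p.1 p.2 ++ [bf p.1 p.2], h3 p.1 p.2⟩) n with hvs
    set g : ℕ → List Bool := fun n => uf (vs n).1 (vs n).2 with hg
    have hvstep : ∀ n, (vs (n+1)).1 = g n ++ [bf (vs n).1 (vs n).2] := fun n => rfl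
    refine ⟨g, ?_, ?_⟩
    · intro i
      have hp1 : g i ++ [bf (vs i).1 (vs i).2] <+: g (i+1) := by
        rw [← hvstep i]
        exact h1 (vs (i+1)).1 (vs (i+1)).2
      constructor
      · exact (List.prefix_append (g i) [bf (vs i).1 (vs i).2]).trans hp1
      · intro hcon
        have hl := hp1.length_le
        rw [← hcon] at hl
        simp at hl
    · intro i
      exact h2 (vs i).1 (vs i).2
  · rintro ⟨g, hchain, hB⟩
    set Y : Set (List Bool) := {v | ∃ i, v <+: g i} with hYdef
    have hpost : Y ⊆ sem (Mx x) (.mu 1 PsiBody)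
        (Function.update (fun _ => (∅ : Set (List Bool))) 0 Y) := by
      rw [semMu_eq]
      rintro v ⟨i, hpre⟩
      refine ⟨g (i+1), hpre.trans (hchain i).1, hB (i+1), ?_⟩
      -- g (i+1) has a strict extension inside g (i+2)
      obtain ⟨t, ht⟩ := (hchain (i+1)).1
      have htne : t ≠ [] := by
        intro hcon
        rw [hcon] at ht
        simp at ht
        exact (hchain (i+1)).2 ht.symm.symm
        
      obtain ⟨b, t', rfl⟩ := List.exists_cons_of_ne_nil htne
      have : g (i+1) ++ [b] <+: g (i+2) := by
        rw [← ht]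
        refine ⟨t', by simp⟩
      rcases b with _ | _
      · exact Or.inl ⟨i+2, this⟩
      · exact Or.inr ⟨i+2, this⟩
    have h0 : [] ∈ Y := ⟨0, List.nil_prefix⟩
    exact sem_le_nu (Mx x) (.mu 1 PsiBody) 0 (fun _ => ∅) hpost h0

end PsiSem


section Coding

open Classical

/-- no infinite `B`-chain (i.e. `¬ Sat Psi`) -/
def NoChain (x : Pt) : Prop :=
  ¬ ∃ g : ℕ → List Bool, (∀ i, g i <+: g (i + 1) ∧ g i ≠ g (i + 1)) ∧ (∀ i, x (cd (g i)) = 1)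

/-- one decoding step -/
def dstep (p : List ℕ × ℕ) (b : Bool) : List ℕ × ℕ :=
  if b then (p.1, p.2 + 1) else (p.1 ++ [p.2], 0)

/-- decode a node into completed blocks and the pending run -/
def decC (s : List Bool) : List ℕ × ℕ := s.foldl dstep ([], 0)

theorem decC_append (s t : List Bool) : decC (s ++ t) = t.foldl dstep (decC s) := by
  simp [decC]

/-- encode a sequence of numbers as a node -/
def encB : List ℕ → List Bool
  | [] => []
  | m :: σ => (List.replicate m true ++ [false]) ++ encB σ

theorem foldl_replicate (m : ℕ) (l : List ℕ) (c : ℕ) :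
    (List.replicate m true).foldl dstep (l, c) = (l, c + m) := by
  induction m generalizing c with
  | zero => simp
  | succ m ih =>
      rw [List.replicate_succ, List.foldl_cons]
      show (List.replicate m true).foldl dstep (l, c + 1) = _
      rw [ih]
      congr 1
      omega

theorem foldl_encB (σ : List ℕ) : ∀ l : List ℕ, (encB σ).foldl dstep (l, 0) = (l ++ σ, 0) := by
  induction σ with
  | nil => intro l; simp [encB]
  | cons m σ ih =>
      intro l
      show ((List.replicate m true ++ [false]) ++ encB σ).foldl dstep (l, 0) = _
      rw [List.foldl_append, List.foldl_append]
      rw [foldl_replicate]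
      show (encB σ).foldl dstep (dstep (l, 0 + m) false) = _
      have : dstep (l, 0 + m) false = (l ++ [m], 0) := by simp [dstep]
      rw [this, ih]
      simp

theorem decC_encB (σ : List ℕ) : decC (encB σ) = (σ, 0) := by
  have := foldl_encB σ []
  simpa [decC] using this

theorem encB_append (σ τ : List ℕ) : encB (σ ++ τ) = encB σ ++ encB τ := by
  induction σ with
  | nil => simp [encB]
  | cons m σ ih => simp [encB, ih]

theorem foldl_fst_prefix : ∀ (t : List Bool) (l : List ℕ) (c : ℕ),
    l <+: (t.foldl dstep (l, c)).1 := by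
  intro t
  induction t with
  | nil => intro l c; exact List.prefix_rfl
  | cons b t ih =>
      intro l c
      rw [List.foldl_cons]
      cases b
      · show l <+: (t.foldl dstep (l ++ [c], 0)).1
        exact (List.prefix_append l [c]).trans (ih (l ++ [c]) 0)
      · exact ih l (c + 1)

theorem foldl_fst_length : ∀ (t : List Bool) (l : List ℕ) (c : ℕ), false ∈ t →
    l.length < (t.foldl dstep (l, c)).1.length := by
  intro t
  induction t with
  | nil => intro l c h; simp at h
  | cons b t ih =>
      intro l c hmem
      rw [List.foldl_cons]
      cases b
      · show l.length < (t.foldl dstep (l ++ [c], 0)).1.length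
        have h1 : (l ++ [c]) <+: (t.foldl dstep (l ++ [c], 0)).1 := foldl_fst_prefix t _ 0
        have h2 := h1.length_le
        simp at h2
        omega
      · have hmem' : false ∈ t := by simpa using hmem
        exact ih l (c + 1) hmem'

theorem foldl_no_false : ∀ (t : List Bool) (l : List ℕ) (c : ℕ), false ∉ t →
    t.foldl dstep (l, c) = (l, c + t.length) := by
  intro t
  induction t with
  | nil => intro l c _; simp
  | cons b t ih =>
      intro l c hmem
      cases b
      · exact absurd List.mem_cons_self hmem
      · rw [List.foldl_cons]
        show t.foldl dstep (l, c + 1) = _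
        rw [ih l (c+1) (fun h => hmem (List.mem_cons_of_mem _ h))]
        congr 1
        simp
        omega

/-- `B`-nodes for the tree labeled by a relation `r` -/
def IsBN (r : ℕ → ℕ → Prop) (s : List Bool) : Prop :=
  (decC s).2 = 0 ∧ (decC s).1 ≠ [] ∧ List.Chain' (fun a b => r b a) (decC s).1

/-- the labeling induced by a relation -/
noncomputable def xrel (r : ℕ → ℕ → Prop) : Pt :=
  fun n => if IsBN r ((Encodable.decode (α := List Bool) n).getD []) then 1 else 0

theorem xrel_cd (r : ℕ → ℕ → Prop) (s : List Bool) :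
    xrel r (cd s) = if IsBN r s then 1 else 0 := by
  simp [xrel, cd]

theorem xrel_cd_one (r : ℕ → ℕ → Prop) (s : List Bool) :
    xrel r (cd s) = 1 ↔ IsBN r s := by
  rw [xrel_cd]
  by_cases h : IsBN r s <;> simp [h]

theorem getD_prefix {l l' : List ℕ} (h : l <+: l') (k : ℕ) (hk : k < l.length) :
    l'.getD k 0 = l.getD k 0 := by
  obtain ⟨t, rfl⟩ := h
  rw [List.getD_append _ _ _ _ hk]

/-- a well-founded labeling admits no infinite `B`-chain -/
theorem xrel_noChain (r : ℕ → ℕ → Prop) (hwf : WellFounded r) : NoChain (xrel r) := by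
  rintro ⟨g, hchain, hB⟩
  have hBN : ∀ i, IsBN r (g i) := fun i => (xrel_cd_one r (g i)).1 (hB i)
  set σ : ℕ → List ℕ := fun i => (decC (g i)).1 with hσ
  have hpre : ∀ i, σ i <+: σ (i + 1) := by
    intro i
    obtain ⟨t, ht⟩ := (hchain i).1
    have : decC (g (i+1)) = t.foldl dstep (decC (g i)) := by rw [← ht]; exact decC_append _ _
    have hp0 : (decC (g i)).2 = 0 := (hBN i).1
    have hdec : decC (g i) = (σ i, 0) := by
      rw [hσ]; exact Prod.ext rfl hp0
    rw [hdec] at this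
    rw [hσ]
    show (decC (g i)).1 <+: (decC (g (i+1))).1
    rw [this, hdec]
    exact foldl_fst_prefix t _ 0
  have hlen : ∀ i, (σ i).length < (σ (i + 1)).length := by
    intro i
    obtain ⟨t, ht⟩ := (hchain i).1
    have htne : t ≠ [] := by
      intro hcon
      rw [hcon] at ht
      simp at ht
      exact (hchain i).2 ht
    have hp0 : decC (g i) = (σ i, 0) := Prod.ext rfl (hBN i).1
    have hdecs : decC (g (i+1)) = t.foldl dstep (σ i, 0) := by
      rw [← ht, decC_append, hp0]
    by_cases hf : false ∈ t
    · have := foldl_fst_length t (σ i) 0 hf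
      rw [hσ]
      show (decC (g i)).1.length < (decC (g (i+1))).1.length
      rw [hdecs, hp0]
      exact this
    · exfalso
      have := foldl_no_false t (σ i) 0 hf
      have h2 : (decC (g (i+1))).2 = 0 := (hBN (i+1)).1
      rw [hdecs, this] at h2
      simp at h2
      rcases List.exists_cons_of_ne_nil htne with ⟨b, t', rfl⟩
      simp at h2
  have hlen' : ∀ i, i < (σ i).length := by
    intro i
    induction i with
    | zero =>
        have := (hBN 0).2.1
        have : (σ 0) ≠ [] := this
        cases h : σ 0 with
        | nil => exact absurd h this
        | cons a l => simp [h]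
    | succ i ih => have := hlen i; omega
  set S : ℕ → ℕ := fun j => (σ j).getD j 0 with hS
  have hstep : ∀ j, r (S (j + 1)) (S j) := by
    intro j
    have hc := (hBN (j+1)).2.2
    have hc : ∀ (i : ℕ) (h : i < (σ (j+1)).length - 1), (fun a b => r b a) ((σ (j+1)).get ⟨i, by omega⟩) ((σ (j+1)).get ⟨i+1, by omega⟩) := fun i h => List.isChain_iff_getElem.1 hc i (by have : i + 1 < (σ (j+1)).length := (by omega); exact this)
    have hj1 : j + 1 < (σ (j+1)).length := hlen' (j+1)
    have hj : j < (σ (j+1)).length - 1 := by omega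
    have := hc j hj
    have e1 : (σ (j+1)).get ⟨j, by omega⟩ = (σ (j+1)).getD j 0 := by
      rw [List.get_eq_getElem, List.getD_eq_getElem _ _ (by omega)]
    have e2 : (σ (j+1)).get ⟨j+1, by omega⟩ = (σ (j+1)).getD (j+1) 0 := by
      rw [List.get_eq_getElem, List.getD_eq_getElem _ _ hj1]
    have e3 : (σ (j+1)).getD j 0 = (σ j).getD j 0 := getD_prefix (hpre j) j (hlen' j)
    rw [e1, e2, e3] at this
    exact this
  obtain ⟨m, ⟨j, hj⟩, hmin⟩ := hwf.has_min (Set.range S) ⟨S 0, 0, rfl⟩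
  exact hmin (S (j + 1)) ⟨j + 1, rfl⟩ (by rw [← hj] at *; exact hstep j)

end Coding


section Amalgam

open Classical Filter

abbrev ANode : Type := List ℕ × List ℕ × List Bool

def PrefF (a : List ℕ) (x : Pt) : Prop := ∀ k, k < a.length → a.getD k 0 = x k

/-- the amalgamated well-founded relation extracted from a closed witness set -/
def RelA (C0 : Set (Pt × Pt)) (p' p : ANode) : Prop :=
  p.1.length < p'.1.length ∧ p.2.1.length < p'.2.1.length ∧
  (∀ k, k < p.1.length → p.1.getD k 0 = p'.1.getD k 0) ∧
  (∀ k, k < p.2.1.length → p.2.1.getD k 0 = p'.2.1.getD k 0) ∧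
  p.2.2 <+: p'.2.2 ∧ p.2.2 ≠ p'.2.2 ∧
  cd p'.2.2 < p'.1.length ∧ p'.1.getD (cd p'.2.2) 0 = 1 ∧
  ∃ x y : Pt, PrefF p'.1 x ∧ PrefF p'.2.1 y ∧ (x, y) ∈ C0

theorem wf_of_no_descending {α : Type} {r : α → α → Prop}
    (h : ∀ f : ℕ → α, ¬ ∀ n, r (f (n + 1)) (f n)) : WellFounded r := by
  constructor
  intro a
  by_contra hna
  have key : ∀ b, ¬ Acc r b → ∃ c, r c b ∧ ¬ Acc r c := by
    intro b hb
    by_contra hc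
    push_neg at hc
    apply hb
    exact Acc.intro b (fun c hcb => by
      by_contra hnc
      exact hnc (hc c hcb))
  have hF : ∀ b : {b : α // ¬ Acc r b}, ∃ c : {b : α // ¬ Acc r b}, r c.1 b.1 := by
    intro b
    obtain ⟨c, hc1, hc2⟩ := key b.1 b.2
    exact ⟨⟨c, hc2⟩, hc1⟩
  choose F hFr using hF
  set seq : ℕ → {b : α // ¬ Acc r b} := fun n =>
    Nat.rec (motive := fun _ => {b : α // ¬ Acc r b}) ⟨a, hna⟩ (fun _ p => F p) n with hseq
  exact h (fun n => (seq n).1) (fun n => hFr (seq n))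

theorem relA_wf (C0 : Set (Pt × Pt)) (hcl : IsClosed C0)
    (hNC : ∀ x y : Pt, (x, y) ∈ C0 → NoChain x) : WellFounded (RelA C0) := by
  apply wf_of_no_descending
  intro f step
  set A : ℕ → List ℕ := fun n => (f n).1 with hA
  set Bb : ℕ → List ℕ := fun n => (f n).2.1 with hBb
  set V : ℕ → List Bool := fun n => (f n).2.2 with hV
  have hlenA : ∀ n, (A n).length < (A (n + 1)).length := fun n => (step n).1
  have hlenB : ∀ n, (Bb n).length < (Bb (n + 1)).length := fun n => (step n).2.1
  have hlenmonA : ∀ n m, n ≤ m → (A n).length ≤ (A m).length := by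
    intro n m hnm
    induction m, hnm using Nat.le_induction with
    | base => exact le_rfl
    | succ m hm ih => exact ih.trans (le_of_lt (hlenA m))
  have hlenmonB : ∀ n m, n ≤ m → (Bb n).length ≤ (Bb m).length := by
    intro n m hnm
    induction m, hnm using Nat.le_induction with
    | base => exact le_rfl
    | succ m hm ih => exact ih.trans (le_of_lt (hlenB m))
  have hconsA : ∀ n m, n ≤ m → ∀ k, k < (A n).length → (A n).getD k 0 = (A m).getD k 0 := by
    intro n m hnm
    induction m, hnm using Nat.le_induction with
    | base => intro k _; rfl
    | succ m hm ih =>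
        intro k hk
        rw [ih k hk]
        exact (step m).2.2.1 k (lt_of_lt_of_le hk (hlenmonA n m hm))
  have hconsB : ∀ n m, n ≤ m → ∀ k, k < (Bb n).length → (Bb n).getD k 0 = (Bb m).getD k 0 := by
    intro n m hnm
    induction m, hnm using Nat.le_induction with
    | base => intro k _; rfl
    | succ m hm ih =>
        intro k hk
        rw [ih k hk]
        exact (step m).2.2.2.1 k (lt_of_lt_of_le hk (hlenmonB n m hm))
  have hgrowA : ∀ n, n ≤ (A n).length := by
    intro n
    induction n with
    | zero => omega
    | succ n ih => have := hlenA n; omega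
  have hgrowB : ∀ n, n ≤ (Bb n).length := by
    intro n
    induction n with
    | zero => omega
    | succ n ih => have := hlenB n; omega
  set x : Pt := fun k => (A (k + 1)).getD k 0 with hx
  set y : Pt := fun k => (Bb (k + 1)).getD k 0 with hy
  have hxA : ∀ n k, k < (A n).length → (A n).getD k 0 = x k := by
    intro n k hk
    rcases le_total n (k + 1) with h | h
    · exact hconsA n (k + 1) h k hk
    · exact (hconsA (k + 1) n h k (by have := hgrowA (k+1); omega)).symm
  have hyB : ∀ n k, k < (Bb n).length → (Bb n).getD k 0 = y k := by
    intro n k hk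
    rcases le_total n (k + 1) with h | h
    · exact hconsB n (k + 1) h k hk
    · exact (hconsB (k + 1) n h k (by have := hgrowB (k+1); omega)).symm
  -- the limit point is in C0
  have hwit : ∀ n, ∃ xw yw : Pt, PrefF (A (n+1)) xw ∧ PrefF (Bb (n+1)) yw ∧ (xw, yw) ∈ C0 := by
    intro n
    exact (step n).2.2.2.2.2.2.2.2
  choose xw yw hxw hyw hmemw using hwit
  have htendx : Tendsto xw atTop (nhds x) := by
    rw [tendsto_pi_nhds]
    intro k
    apply Tendsto.congr' _ tendsto_const_nhds
    rw [Filter.EventuallyEq, eventually_atTop]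
    refine ⟨k + 1, fun n hn => ?_⟩
    have hk : k < (A (n + 1)).length := by
      have := hgrowA (n + 1); omega
    have := hxw n k hk
    rw [← this, hxA (n+1) k hk]
  have htendy : Tendsto yw atTop (nhds y) := by
    rw [tendsto_pi_nhds]
    intro k
    apply Tendsto.congr' _ tendsto_const_nhds
    rw [Filter.EventuallyEq, eventually_atTop]
    refine ⟨k + 1, fun n hn => ?_⟩
    have hk : k < (Bb (n + 1)).length := by
      have := hgrowB (n + 1); omega
    have := hyw n k hk
    rw [← this, hyB (n+1) k hk]
  have hmem : (x, y) ∈ C0 := by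
    apply hcl.mem_of_tendsto (htendx.prodMk_nhds htendy)
    exact Eventually.of_forall (fun n => hmemw n)
  -- but x has an infinite B-chain
  apply hNC x y hmem
  refine ⟨fun n => V (n + 1), ?_, ?_⟩
  · intro n
    exact ⟨(step (n + 1)).2.2.2.2.1, (step (n + 1)).2.2.2.2.2.1⟩
  · intro n
    have h1 : cd (V (n + 1)) < (A (n + 1)).length := (step n).2.2.2.2.2.2.1
    have h2 : (A (n + 1)).getD (cd (V (n + 1))) 0 = 1 := (step n).2.2.2.2.2.2.2.1
    rw [← hxA (n + 1) _ h1]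
    exact h2

end Amalgam


section Ranks

open Classical Ordinal

/-- rank of an element of a well-founded relation -/
noncomputable def rnk {α : Type} {r : α → α → Prop} (hwf : WellFounded r) (a : α) : Ordinal :=
  (hwf.apply a).rank

theorem rnk_lt_of_rel {α : Type} {r : α → α → Prop} (hwf : WellFounded r) {a b : α}
    (h : r a b) : rnk hwf a < rnk hwf b := by
  have h1 := Acc.rank_lt_of_rel (hwf.apply b) h
  have e : ((hwf.apply b).inv h) = hwf.apply a := Subsingleton.elim _ _
  rw [e] at h1
  exact h1

theorem rnk_le_of {α : Type} {r : α → α → Prop} (hwf : WellFounded r) (a : α) (c : Ordinal)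
    (h : ∀ b, r b a → rnk hwf b < c) : rnk hwf a ≤ c := by
  show (hwf.apply a).rank ≤ c
  rw [Acc.rank_eq]
  apply Ordinal.iSup_le
  rintro ⟨b, hb⟩
  have e : ((hwf.apply a).inv hb) = hwf.apply b := Subsingleton.elim _ _
  rw [e]
  rw [Order.succ_le_iff]
  exact h b hb

theorem rnk_lt_omega1 {α : Type} [Countable α] {r : α → α → Prop} (hwf : WellFounded r)
    (a : α) : rnk hwf a < (Cardinal.aleph 1).ord := by
  induction a using WellFounded.induction hwf with
  | _ a IH =>
      apply lt_of_le_of_lt (rnk_le_of hwf a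
        (⨆ b : {b : α // r b a}, Order.succ (rnk hwf b)) ?_) ?_
      · intro b hb
        calc rnk hwf b < Order.succ (rnk hwf b) := Order.lt_succ _
          _ ≤ _ := Ordinal.le_iSup (fun b : {b : α // r b a} => Order.succ (rnk hwf b)) ⟨b, hb⟩
      · apply Cardinal.iSup_lt_ord_of_isRegular Cardinal.isRegular_aleph_one
        · exact lt_of_le_of_lt Cardinal.mk_le_aleph0 Cardinal.aleph0_lt_aleph_one
        · rintro ⟨b, hb⟩
          exact (Cardinal.isSuccLimit_ord (Cardinal.aleph0_le_aleph 1)).succ_lt (IH b hb)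

/-- realize any countable ordinal as the rank of an element of a
well-founded relation on `ℕ` -/
theorem realize_rank (β : Ordinal) (hβ : β < (Cardinal.aleph 1).ord) :
    ∃ (r : ℕ → ℕ → Prop) (hwf : WellFounded r) (m : ℕ), β ≤ rnk hwf m := by
  set o : Ordinal := β + 1 with ho
  have hβo : β < o := by
    rw [ho, Ordinal.add_one_eq_succ]
    exact Order.lt_succ β
  have h1 : o < (Cardinal.aleph 1).ord := by
    have h2 := (Cardinal.isSuccLimit_ord (Cardinal.aleph0_le_aleph 1)).succ_lt hβ
    rw [ho, Ordinal.add_one_eq_succ]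
    exact h2
  have hne : o ≠ 0 := by
    have : (0 : Ordinal) < o := lt_of_le_of_lt zero_le hβo
    exact this.ne'
  haveI hT : Nonempty o.ToType := Ordinal.toType_nonempty_iff_ne_zero.2 hne
  haveI hcount : Countable o.ToType := by
    rw [← Cardinal.mk_le_aleph0_iff, Cardinal.mk_toType]
    have h2 : o.card < Cardinal.aleph 1 := Cardinal.lt_ord.1 h1
    rw [← Cardinal.succ_aleph0] at h2
    exact Order.lt_succ_iff.1 h2
  obtain ⟨e, hsurj⟩ := exists_surjective_nat o.ToType
  haveI hwo : IsWellOrder o.ToType ((· < ·) : o.ToType → o.ToType → Prop) := isWellOrder_lt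
  have hwfT : WellFounded ((· < ·) : o.ToType → o.ToType → Prop) :=
    (wellFoundedLT_toType o).wf
  have hwfr : WellFounded (InvImage ((· < ·) : o.ToType → o.ToType → Prop) e) :=
    InvImage.wf e hwfT
  have htype : Ordinal.type ((· < ·) : o.ToType → o.ToType → Prop) = o := Ordinal.type_toType o
  have hβtype : β < Ordinal.type ((· < ·) : o.ToType → o.ToType → Prop) := by
    rw [htype]; exact hβo
  obtain ⟨t, ht⟩ := Ordinal.typein_surj _ hβtype
  obtain ⟨m, hm⟩ := hsurj t
  refine ⟨_, hwfr, m, ?_⟩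
  have hrank_typein : IsWellFounded.rank ((· < ·) : o.ToType → o.ToType → Prop) t
      = Ordinal.typein ((· < ·) : o.ToType → o.ToType → Prop) t := by
    rw [IsWellFounded.rank_eq_typein]
  have hrnk_eq : rnk hwfT t = IsWellFounded.rank ((· < ·) : o.ToType → o.ToType → Prop) t :=
    congrArg Acc.rank (Subsingleton.elim _ _)
  have transfer : ∀ t' : o.ToType, ∀ p, e p = t' → rnk hwfT t' ≤ rnk hwfr p := by
    intro t'
    induction t' using WellFounded.induction hwfT with
    | _ t' IH =>
        intro p hp
        apply rnk_le_of
        intro b hb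
        obtain ⟨q, hq⟩ := hsurj b
        calc rnk hwfT b ≤ rnk hwfr q := IH b hb q hq
          _ < rnk hwfr p := by
              apply rnk_lt_of_rel
              show e q < e p
              rw [hq, hp]
              exact hb
  calc β = Ordinal.typein ((· < ·) : o.ToType → o.ToType → Prop) t := ht.symm
    _ = IsWellFounded.rank ((· < ·) : o.ToType → o.ToType → Prop) t := hrank_typein.symm
    _ = rnk hwfT t := hrnk_eq.symm
    _ ≤ rnk hwfr m := transfer t m hm

end Ranks


section RankV

open Classical

/-- list of the first `ℓ` values of `x` -/
def lOf (x : Pt) (ℓ : ℕ) : List ℕ := (List.range ℓ).map x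

theorem lOf_length (x : Pt) (ℓ : ℕ) : (lOf x ℓ).length = ℓ := by simp [lOf]

theorem lOf_getD (x : Pt) (ℓ k : ℕ) (hk : k < ℓ) : (lOf x ℓ).getD k 0 = x k := by
  rw [List.getD_eq_getElem _ _ (by rw [lOf_length]; exact hk)]
  simp [lOf]

theorem prefF_lOf (x : Pt) (ℓ : ℕ) : PrefF (lOf x ℓ) x := by
  intro k hk
  rw [lOf_length] at hk
  exact lOf_getD x ℓ k hk

theorem encB_concat_length (σ : List ℕ) (m : ℕ) :
    (encB (σ ++ [m])).length = (encB σ).length + (m + 1) := by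
  rw [encB_append]
  simp [encB]

/-- KEY RANK BOUND: the rank of `m` in a well-founded relation `r` is bounded by
the rank of the corresponding amalgam node. -/
theorem rankV (C0 : Set (Pt × Pt)) (hcl : IsClosed C0)
    (hNC : ∀ x y : Pt, (x, y) ∈ C0 → NoChain x)
    (r : ℕ → ℕ → Prop) (hwfr : WellFounded r) (y : Pt)
    (hy : (xrel r, y) ∈ C0) :
    ∀ m : ℕ, ∀ σ : List ℕ, List.Chain' (fun a b => r b a) (σ ++ [m]) →
    ∀ ℓ : ℕ, cd (encB (σ ++ [m])) < ℓ →
    rnk hwfr m ≤ rnk (relA_wf C0 hcl hNC)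
      ((lOf (xrel r) ℓ, lOf y ℓ, encB (σ ++ [m])) : ANode) := by
  intro m
  induction m using WellFounded.induction hwfr with
  | _ m IH =>
      intro σ hdesc ℓ hℓ
      apply rnk_le_of
      intro m' hm'
      have hdesc' : List.Chain' (fun a b => r b a) ((σ ++ [m]) ++ [m']) := by
        rw [List.Chain', List.isChain_append]
        refine ⟨hdesc, List.isChain_singleton _, ?_⟩
        intro a ha b hb
        rw [List.getLast?_concat] at ha
        simp only [List.head?_cons, Option.mem_def, Option.some.injEq] at ha hb
        subst ha
        subst hb
        exact hm'
      set ℓ' : ℕ := max (ℓ + 1) (cd (encB ((σ ++ [m]) ++ [m'])) + 1) with hℓ'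
      have hcd' : cd (encB ((σ ++ [m]) ++ [m'])) < ℓ' := by
        have := le_max_right (ℓ + 1) (cd (encB ((σ ++ [m]) ++ [m'])) + 1)
        omega
      have hℓℓ' : ℓ < ℓ' := by
        have := le_max_left (ℓ + 1) (cd (encB ((σ ++ [m]) ++ [m'])) + 1)
        omega
      have h1 := IH m' hm' (σ ++ [m]) hdesc' ℓ' hcd'
      have hBN : IsBN r (encB ((σ ++ [m]) ++ [m'])) := by
        refine ⟨?_, ?_, ?_⟩
        · rw [decC_encB]
        · rw [decC_encB]
          simp
        · rw [decC_encB]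
          exact hdesc'
      have hrel : RelA C0
          ((lOf (xrel r) ℓ', lOf y ℓ', encB ((σ ++ [m]) ++ [m'])) : ANode)
          ((lOf (xrel r) ℓ, lOf y ℓ, encB (σ ++ [m])) : ANode) := by
        refine ⟨?_, ?_, ?_, ?_, ?_, ?_, ?_, ?_, ?_⟩
        · rw [lOf_length, lOf_length]; exact hℓℓ'
        · rw [lOf_length, lOf_length]; exact hℓℓ'
        · intro k hk
          rw [lOf_length] at hk
          rw [lOf_getD _ _ _ hk, lOf_getD _ _ _ (hk.trans hℓℓ')]
        · intro k hk
          rw [lOf_length] at hk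
          rw [lOf_getD _ _ _ hk, lOf_getD _ _ _ (hk.trans hℓℓ')]
        · show encB (σ ++ [m]) <+: encB ((σ ++ [m]) ++ [m'])
          rw [encB_append (σ ++ [m]) [m']]
          exact List.prefix_append _ _
        · show encB (σ ++ [m]) ≠ encB ((σ ++ [m]) ++ [m'])
          intro hcon
          have hle := congrArg List.length hcon
          rw [encB_concat_length (σ ++ [m]) m'] at hle
          omega
        · rw [lOf_length]; exact hcd'
        · rw [lOf_getD _ _ _ hcd']
          exact (xrel_cd_one r _).2 hBN
        · exact ⟨xrel r, y, prefF_lOf _ _, prefF_lOf _ _, hy⟩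
      calc rnk hwfr m' ≤ rnk (relA_wf C0 hcl hNC) _ := h1
        _ < _ := rnk_lt_of_rel _ hrel

end RankV

/-- With a single action and distinct propositional variables
`A = prop 0` and `B = prop 1`, the formula `νY.μX.((A ∧ ⟨a⟩X) ∨ (B ∧ ⟨a⟩Y))` is
not equivalent to any `Σμ2` formula. -/
theorem example_formula_not_sigma2 :
    ¬ SemSigma2 (Formula.nu 0 (.mu 1
      (.or (.and (.prop 0) (.dia () (.var 1)))
           (.and (.prop 1) (.dia () (.var 0)))))) := by
  rintro ⟨Φ, ⟨Ω, hPA, hmem⟩, heq⟩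
  have hbd : ∀ X ∈ fixVars Φ, Ω X ≤ 1 := by
    intro X hX
    have h := hmem X hX
    simp only [Set.mem_insert_iff, Set.mem_singleton_iff] at h
    omega
  have henvPi : PiF (fun _ : Pt => (∅ : Set (List Bool))) := by
    apply piF_of_open
    intro s
    have he : {q : Pt | s ∈ (∅ : Set (List Bool))} = ∅ := by ext q; simp
    rw [he]; exact isOpen_empty
  have hPi := main_induction Ω Φ hPA hbd Pt id continuous_id
      (fun _ => fun _ => ∅) (fun _ => henvPi)
  obtain ⟨C, hCcl, hCiff⟩ := hPi
  set C0 : Set (Pt × Pt) := C [] with hC0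
  have hspec : ∀ x : Pt, ¬ Sat (Mx x) Φ ↔ ∃ y : Pt, (x, y) ∈ C0 := by
    intro x
    exact hCiff x []
  have hNC : ∀ x y : Pt, (x, y) ∈ C0 → NoChain x := by
    intro x y hxy hch
    have h1 : Sat (Mx x) Psi := (psi_iff x).2 hch
    have h2 : Sat (Mx x) Φ := (heq (Mx x)).1 h1
    exact ((hspec x).2 ⟨y, hxy⟩) h2
  have wfA := relA_wf C0 (hCcl []) hNC
  set β : Ordinal := ⨆ p : ANode, Order.succ (rnk wfA p) with hβ
  have hβlt : β < (Cardinal.aleph 1).ord := by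
    apply Cardinal.iSup_lt_ord_of_isRegular Cardinal.isRegular_aleph_one
    · exact lt_of_le_of_lt Cardinal.mk_le_aleph0 Cardinal.aleph0_lt_aleph_one
    · intro p
      exact (Cardinal.isSuccLimit_ord (Cardinal.aleph0_le_aleph 1)).succ_lt (rnk_lt_omega1 wfA p)
  obtain ⟨r, hwfr, m, hm⟩ := realize_rank β hβlt
  have hNCx : NoChain (xrel r) := xrel_noChain r hwfr
  have hnsat : ¬ Sat (Mx (xrel r)) Φ := by
    intro h
    exact hNCx ((psi_iff (xrel r)).1 ((heq (Mx (xrel r))).2 h))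
  obtain ⟨y, hy⟩ := (hspec (xrel r)).1 hnsat
  have hdesc : List.Chain' (fun a b => r b a) (([] : List ℕ) ++ [m]) := by simp [List.Chain']
  have hV := rankV C0 (hCcl []) hNC r hwfr y hy m [] hdesc
      (cd (encB (([] : List ℕ) ++ [m])) + 1) (by omega)
  have hub : Order.succ (rnk (relA_wf C0 (hCcl []) hNC)
      ((lOf (xrel r) (cd (encB (([] : List ℕ) ++ [m])) + 1),
        lOf y (cd (encB (([] : List ℕ) ++ [m])) + 1),
        encB (([] : List ℕ) ++ [m])) : ANode)) ≤ β := by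
    rw [hβ]
    have heqwf : relA_wf C0 (hCcl []) hNC = wfA := Subsingleton.elim _ _
    rw [heqwf]
    exact Ordinal.le_iSup (fun p : ANode => Order.succ (rnk wfA p)) _
  have hcontra : β < β := by
    calc β ≤ rnk hwfr m := hm
      _ ≤ rnk (relA_wf C0 (hCcl []) hNC) _ := hV
      _ < Order.succ (rnk (relA_wf C0 (hCcl []) hNC) _) := Order.lt_succ _
      _ ≤ β := hub
  exact absurd hcontra (lt_irrefl β)

end MuCalc
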